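/- arXiv:0908.2587 — 7 statements merged into one kernel-verified Lean document; each statement's English description precedes it below -/
import Mathlib

section
/- (Lemma 3.13.) For every f ∈ B₁ one has |c₁(f)| ≤ 2/e, and equality holds only for the rotations of κ₀, i.e., only when f(z) = e^{iα₁} κ₀(e^{iα} z) for some real α, α₁. -/
open Metric Set Complex


/-- The `n`-th Taylor coefficient of `f` at `0`. -/
noncomputable def taylorCoeff (f : ℂ → ℂ) (n : ℕ) : ℂ :=
  iteratedDeriv n f 0 / n.factorial

/-- The universal covering map `κ₀(z) = exp((z-1)/(z+1))` of `Δ` onto `Δ*`. -/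
noncomputable def kappa0 (z : ℂ) : ℂ :=
  Complex.exp ((z - 1) / (z + 1))



open Metric Set intervalIntegral

/-- A primitive of a holomorphic function on the unit ball. -/
lemma exists_primitive_ball {h : ℂ → ℂ} (hh : DifferentiableOn ℂ h (ball (0:ℂ) 1)) :
    ∃ H : ℂ → ℂ, H 0 = 0 ∧ ∀ z ∈ ball (0:ℂ) 1, HasDerivAt H (h z) z := by
  have hopen : IsOpen (ball (0:ℂ) 1) := isOpen_ball
  have hh' : DifferentiableOn ℂ (deriv h) (ball (0:ℂ) 1) :=
    ((hh.analyticOnNhd hopen).deriv).differentiableOn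
  set H : ℂ → ℂ := fun z => ∫ t in (0:ℝ)..1, z * h ((t:ℂ) * z) with hH
  refine ⟨H, by simp [hH], ?_⟩
  intro z₀ hz₀
  rw [mem_ball_zero_iff] at hz₀
  set ε : ℝ := (1 - ‖z₀‖) / 2 with hε
  have hεpos : 0 < ε := by
    simp only [hε]; linarith
  set r : ℝ := ‖z₀‖ + ε with hr
  have hr1 : r < 1 := by simp only [hr, hε]; linarith
  have hrpos : 0 ≤ r := by positivity
  -- membership facts
  have hmem_ball : ∀ x : ℂ, x ∈ ball z₀ ε → ‖x‖ < r := by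
    intro x hx
    have : dist x z₀ < ε := mem_ball.1 hx
    calc ‖x‖ ≤ ‖z₀‖ + ‖x - z₀‖ := by
          have := norm_add_le z₀ (x - z₀); rwa [add_sub_cancel] at this
      _ < r := by
          rw [hr]
          have : ‖x - z₀‖ < ε := by rwa [Complex.dist_eq] at this
          linarith
  have htx : ∀ (t : ℝ) (x : ℂ), |t| ≤ 1 → ‖x‖ < r → (t:ℂ) * x ∈ closedBall (0:ℂ) r := by
    intro t x ht hx
    rw [mem_closedBall_zero_iff]
    calc ‖(t:ℂ) * x‖ = |t| * ‖x‖ := by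
          simp
      _ ≤ 1 * r := by
          apply mul_le_mul ht hx.le (norm_nonneg x) zero_le_one
      _ = r := one_mul r
  have hsub : closedBall (0:ℂ) r ⊆ ball (0:ℂ) 1 := closedBall_subset_ball hr1
  -- bounds
  obtain ⟨C₁, hC₁⟩ := (isCompact_closedBall (0:ℂ) r).exists_bound_of_continuousOn
    (hh.continuousOn.mono hsub)
  obtain ⟨C₂, hC₂⟩ := (isCompact_closedBall (0:ℂ) r).exists_bound_of_continuousOn
    (hh'.continuousOn.mono hsub)
  have hC₁0 : 0 ≤ C₁ := le_trans (norm_nonneg _) (hC₁ 0 (mem_closedBall_self hrpos))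
  -- continuity helper
  have hcont : ∀ x : ℂ, ‖x‖ < r →
      ContinuousOn (fun t : ℝ => x * h ((t:ℂ) * x)) (Icc (0:ℝ) 1) := by
    intro x hx
    apply ContinuousOn.mul continuousOn_const
    apply (hh.continuousOn.mono hsub).comp
      ((Complex.continuous_ofReal.continuousOn).mul continuousOn_const)
    intro t ht
    exact htx t x (abs_le.2 ⟨by linarith [ht.1], ht.2⟩) hx
  have hcont' : ∀ x : ℂ, ‖x‖ < r →
      ContinuousOn (fun t : ℝ => h ((t:ℂ) * x) + x * ((t:ℂ) * deriv h ((t:ℂ) * x)))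
        (Icc (0:ℝ) 1) := by
    intro x hx
    have hmap : ∀ t ∈ Icc (0:ℝ) 1, (t:ℂ) * x ∈ closedBall (0:ℂ) r := fun t ht =>
      htx t x (abs_le.2 ⟨by linarith [ht.1], ht.2⟩) hx
    have c1 : ContinuousOn (fun t : ℝ => h ((t:ℂ) * x)) (Icc (0:ℝ) 1) :=
      (hh.continuousOn.mono hsub).comp
        ((Complex.continuous_ofReal.continuousOn).mul continuousOn_const) hmap
    have c2 : ContinuousOn (fun t : ℝ => deriv h ((t:ℂ) * x)) (Icc (0:ℝ) 1) :=
      (hh'.continuousOn.mono hsub).comp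
        ((Complex.continuous_ofReal.continuousOn).mul continuousOn_const) hmap
    exact c1.add (continuousOn_const.mul
      ((Complex.continuous_ofReal.continuousOn).mul c2))
  have hIsub : Set.uIoc (0:ℝ) 1 ⊆ Icc (0:ℝ) 1 := by
    rw [uIoc_of_le (zero_le_one)]; exact Ioc_subset_Icc_self
  have key := intervalIntegral.hasDerivAt_integral_of_dominated_loc_of_deriv_le
    (μ := MeasureTheory.volume) (a := (0:ℝ)) (b := 1)
    (F := fun x t => x * h ((t:ℂ) * x))
    (F' := fun x t => h ((t:ℂ) * x) + x * ((t:ℂ) * deriv h ((t:ℂ) * x)))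
    (x₀ := z₀) (bound := fun _ => C₁ + C₂) (ball_mem_nhds z₀ hεpos)
    ?_ ?_ ?_ ?_ ?_ ?_
  · obtain ⟨hint, hder⟩ := key
    have hval : (∫ t in (0:ℝ)..1, (h ((t:ℂ) * z₀) + z₀ * ((t:ℂ) * deriv h ((t:ℂ) * z₀)))) = h z₀ := by
      have hFTC := intervalIntegral.integral_eq_sub_of_hasDerivAt
        (f := fun t : ℝ => (t:ℂ) * h ((t:ℂ) * z₀))
        (f' := fun t : ℝ => h ((t:ℂ) * z₀) + z₀ * ((t:ℂ) * deriv h ((t:ℂ) * z₀)))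
        (a := (0:ℝ)) (b := 1) ?_ hint
      · rw [hFTC]; simp
      · intro t ht
        rw [uIcc_of_le zero_le_one] at ht
        have hmem' : (t:ℂ) * z₀ ∈ ball (0:ℂ) 1 :=
          hsub (htx t z₀ (abs_le.2 ⟨by linarith [ht.1], ht.2⟩) (by simp [hr]; linarith))
        have hd : HasDerivAt h (deriv h ((t:ℂ) * z₀)) ((t:ℂ) * z₀) :=
          (hh.differentiableAt (hopen.mem_nhds hmem')).hasDerivAt
        have hcomp : HasDerivAt (fun y : ℂ => h (y * z₀)) (deriv h ((t:ℂ) * z₀) * z₀) (t:ℂ) := by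
          exact hd.comp (t:ℂ) (hasDerivAt_mul_const z₀)
        have hprod : HasDerivAt (fun y : ℂ => y * h (y * z₀))
            (1 * h ((t:ℂ) * z₀) + (t:ℂ) * (deriv h ((t:ℂ) * z₀) * z₀)) (t:ℂ) :=
          (hasDerivAt_id ((t:ℂ))).mul hcomp
        have := hprod.comp_ofReal
        refine this.congr_deriv ?_
        ring
    rw [hval] at hder
    exact hder
  · -- hF_meas
    filter_upwards [ball_mem_nhds z₀ hεpos] with x hx
    exact ((hcont x (hmem_ball x hx)).mono hIsub).aestronglyMeasurable measurableSet_uIoc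
  · -- hF_int
    refine ContinuousOn.intervalIntegrable ?_
    rw [uIcc_of_le zero_le_one]
    exact hcont z₀ (by simp [hr]; linarith)
  · -- hF'_meas
    exact (((hcont' z₀ (by simp [hr]; linarith)).mono hIsub).aestronglyMeasurable
      measurableSet_uIoc)
  · -- h_bound
    apply MeasureTheory.ae_of_all
    intro t ht x hx
    have ht' : |t| ≤ 1 := by
      have := hIsub ht
      exact abs_le.2 ⟨by linarith [this.1], this.2⟩
    have hxr := hmem_ball x hx
    have htxm := htx t x ht' hxr
    calc ‖h ((t:ℂ) * x) + x * ((t:ℂ) * deriv h ((t:ℂ) * x))‖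
        ≤ ‖h ((t:ℂ) * x)‖ + ‖x * ((t:ℂ) * deriv h ((t:ℂ) * x))‖ := norm_add_le _ _
      _ ≤ C₁ + C₂ := by
          gcongr
          · exact hC₁ _ htxm
          · calc ‖x * ((t:ℂ) * deriv h ((t:ℂ) * x))‖
                = ‖x‖ * (|t| * ‖deriv h ((t:ℂ) * x)‖) := by
                  simp
              _ ≤ 1 * (1 * C₂) := by
                  have h1 : ‖x‖ ≤ 1 := le_of_lt (lt_of_lt_of_le hxr hr1.le)
                  have h2 : ‖deriv h ((t:ℂ) * x)‖ ≤ C₂ := hC₂ _ htxm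
                  have h3 : (0:ℝ) ≤ C₂ := le_trans (norm_nonneg _) (hC₂ 0 (mem_closedBall_self hrpos))
                  gcongr
              _ = C₂ := by ring
  · -- bound_integrable
    exact intervalIntegrable_const
  · -- h_diff
    apply MeasureTheory.ae_of_all
    intro t ht x hx
    have hxr := hmem_ball x hx
    have ht' : |t| ≤ 1 := by
      have := hIsub ht
      exact abs_le.2 ⟨by linarith [this.1], this.2⟩
    have hmem' : (t:ℂ) * x ∈ ball (0:ℂ) 1 := hsub (htx t x ht' hxr)
    have hd : HasDerivAt h (deriv h ((t:ℂ) * x)) ((t:ℂ) * x) :=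
      (hh.differentiableAt (hopen.mem_nhds hmem')).hasDerivAt
    have hcomp : HasDerivAt (fun y : ℂ => h ((t:ℂ) * y)) (deriv h ((t:ℂ) * x) * (t:ℂ)) x := by
      exact hd.comp x (hasDerivAt_const_mul (t:ℂ))
    have hprod : HasDerivAt (fun y : ℂ => y * h ((t:ℂ) * y))
        (1 * h ((t:ℂ) * x) + x * (deriv h ((t:ℂ) * x) * (t:ℂ))) x :=
      (hasDerivAt_id x).mul hcomp
    refine hprod.congr_deriv ?_
    ring

/-- A holomorphic logarithm on the unit ball. -/
lemma exists_log_ball {f : ℂ → ℂ} (hf : DifferentiableOn ℂ f (ball (0:ℂ) 1))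
    (hne : ∀ z ∈ ball (0:ℂ) 1, f z ≠ 0) :
    ∃ g : ℂ → ℂ, (∀ z ∈ ball (0:ℂ) 1, f z = Complex.exp (g z)) ∧
      (∀ z ∈ ball (0:ℂ) 1, HasDerivAt g (deriv f z / f z) z) := by
  have hopen : IsOpen (ball (0:ℂ) 1) := isOpen_ball
  have hf' : DifferentiableOn ℂ (deriv f) (ball (0:ℂ) 1) :=
    ((hf.analyticOnNhd hopen).deriv).differentiableOn
  have hh : DifferentiableOn ℂ (fun z => deriv f z / f z) (ball (0:ℂ) 1) :=
    hf'.div hf hne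
  obtain ⟨H, hH0, hHd⟩ := exists_primitive_ball hh
  set g : ℂ → ℂ := fun z => Complex.log (f 0) + H z with hg
  have h0 : (0:ℂ) ∈ ball (0:ℂ) 1 := mem_ball_self one_pos
  have hgd : ∀ z ∈ ball (0:ℂ) 1, HasDerivAt g (deriv f z / f z) z := by
    intro z hz
    simpa [hg] using (hHd z hz).const_add (Complex.log (f 0))
  refine ⟨g, ?_, hgd⟩
  -- q = f * exp(-g) is constant
  set q : ℂ → ℂ := fun z => f z * Complex.exp (-g z) with hq
  have hqd : ∀ z ∈ ball (0:ℂ) 1, HasDerivAt q 0 z := by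
    intro z hz
    have hfz : HasDerivAt f (deriv f z) z := (hf.differentiableAt (hopen.mem_nhds hz)).hasDerivAt
    have hgz := hgd z hz
    have hexp : HasDerivAt (fun w => Complex.exp (-g w))
        (Complex.exp (-g z) * (-(deriv f z / f z))) z := by
      have := (Complex.hasDerivAt_exp (-g z)).comp z (hgz.neg)
      exact hgz.neg.cexp
    have := hfz.mul hexp
    refine this.congr_deriv ?_
    symm
    have hfz0 := hne z hz
    rw [div_eq_mul_inv]
    linear_combination (deriv f z * cexp (-g z)) * mul_inv_cancel₀ hfz0
  have hconst : ∀ z ∈ ball (0:ℂ) 1, q z = q 0 := by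
    intro z hz
    have hqdiff : DifferentiableOn ℂ q (ball (0:ℂ) 1) := fun w hw =>
      ((hqd w hw).differentiableAt).differentiableWithinAt
    refine (convex_ball (0:ℂ) 1).is_const_of_fderivWithin_eq_zero hqdiff ?_ hz h0
    intro w hw
    have : fderiv ℂ q w = 0 := by
      have := (hqd w hw).hasFDerivAt.fderiv
      rw [this]; ext v; simp
    rw [fderivWithin_of_isOpen hopen hw, this]
  have hq0 : q 0 = 1 := by
    simp only [hq, hg, hH0, add_zero, neg_add_rev, neg_zero, zero_add]
    rw [Complex.exp_neg, Complex.exp_log (hne 0 h0)]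
    field_simp
    exact div_self (hne 0 h0)
  intro z hz
  have := hconst z hz
  rw [hq0] at this
  have hexpne : Complex.exp (-g z) ≠ 0 := Complex.exp_ne_zero _
  have : f z = (Complex.exp (-g z))⁻¹ := by
    field_simp [hq] at this ⊢
    linear_combination this
  rw [this, Complex.exp_neg, inv_inv]

/-- Lemma 3.13: for every `f ∈ B₁`, `|c₁(f)| ≤ 2/e`, with equality only for
the rotations `e^{iα₁} κ₀(e^{iα} z)` of `κ₀`. -/
theorem lemma_3_13
    (f : ℂ → ℂ)
    (hf : DifferentiableOn ℂ f (Metric.ball (0 : ℂ) 1))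
    (hmem : ∀ z ∈ Metric.ball (0 : ℂ) 1, f z ≠ 0 ∧ ‖f z‖ < 1) :
    ‖taylorCoeff f 1‖ ≤ 2 / Real.exp 1 ∧
      (‖taylorCoeff f 1‖ = 2 / Real.exp 1 →
        ∃ α α₁ : ℝ, ∀ z ∈ Metric.ball (0 : ℂ) 1,
          f z = Complex.exp (Complex.I * (α₁ : ℂ)) *
            kappa0 (Complex.exp (Complex.I * (α : ℂ)) * z)) := by
  have hopen : IsOpen (ball (0:ℂ) 1) := isOpen_ball
  have h0 : (0:ℂ) ∈ ball (0:ℂ) 1 := mem_ball_self one_pos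
  have hne : ∀ z ∈ ball (0:ℂ) 1, f z ≠ 0 := fun z hz => (hmem z hz).1
  obtain ⟨g, hfg, hgd⟩ := exists_log_ball hf hne
  set a : ℂ := g 0 with ha_def
  -- real part of g is negative
  have hgre : ∀ z ∈ ball (0:ℂ) 1, (g z).re < 0 := by
    intro z hz
    have h1 : ‖f z‖ < 1 := (hmem z hz).2
    rw [hfg z hz, Complex.norm_exp] at h1
    exact (Real.exp_lt_one_iff).1 h1
  have hare : a.re < 0 := hgre 0 h0
  set x : ℝ := -a.re with hx_def
  have hx : 0 < x := by simp [hx_def]; linarith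
  set g'0 : ℂ := deriv f 0 / f 0 with hg'0_def
  have hg0 : HasDerivAt g g'0 0 := hgd 0 h0
  -- denominators
  have hden : ∀ z ∈ ball (0:ℂ) 1, g z + (starRingEnd ℂ) a ≠ 0 := by
    intro z hz heq
    have := congrArg Complex.re heq
    simp only [Complex.add_re, Complex.conj_re, Complex.zero_re] at this
    have := hgre z hz
    linarith
  set F : ℂ → ℂ := fun z => (g z - a) / (g z + (starRingEnd ℂ) a) with hF_def
  have hgdiff : DifferentiableOn ℂ g (ball (0:ℂ) 1) := fun z hz =>
    ((hgd z hz).differentiableAt).differentiableWithinAt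
  have hFdiff : DifferentiableOn ℂ F (ball (0:ℂ) 1) :=
    ((hgdiff.sub_const a).div (hgdiff.add_const _) hden)
  have hF0 : F 0 = 0 := by simp [hF_def, ha_def]
  have habslt : ∀ z ∈ ball (0:ℂ) 1,
      ‖g z - a‖ < ‖g z + (starRingEnd ℂ) a‖ := by
    intro z hz
    have h1 : Complex.normSq (g z - a) < Complex.normSq (g z + (starRingEnd ℂ) a) := by
      simp only [Complex.normSq_apply, Complex.sub_re, Complex.sub_im, Complex.add_re,
        Complex.add_im, Complex.conj_re, Complex.conj_im]
      nlinarith [hgre z hz, hare]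
    rw [Complex.norm_def, Complex.norm_def]
    exact Real.sqrt_lt_sqrt (Complex.normSq_nonneg _) h1
  have hmaps : MapsTo F (ball (0:ℂ) 1) (ball (0:ℂ) 1) := by
    intro z hz
    rw [mem_ball_zero_iff, hF_def]
    simp only [norm_div]
    rw [div_lt_one (by
      have := habslt z hz
      have h2 := norm_nonneg (g z - a)
      linarith)]
    exact habslt z hz
  -- derivative of F at 0
  set d : ℂ := g'0 / (2 * (a.re : ℂ)) with hd_def
  have hare_ne : (a.re : ℂ) ≠ 0 := by
    simp only [ne_eq, Complex.ofReal_eq_zero]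
    linarith
  have hd : HasDerivAt F d 0 := by
    have hu : HasDerivAt (fun z => g z - a) g'0 0 := hg0.sub_const a
    have hv : HasDerivAt (fun z => g z + (starRingEnd ℂ) a) g'0 0 := hg0.add_const _
    have := hu.div hv (hden 0 h0)
    refine this.congr_deriv ?_
    symm
    rw [hd_def]
    have h2 : a + (starRingEnd ℂ) a = ((2 * a.re : ℝ) : ℂ) := Complex.add_conj a
    have h3 : a + (starRingEnd ℂ) a ≠ 0 := hden 0 h0
    push_cast at h2
    rw [show g 0 = a from rfl]
    rw [sub_self, zero_mul, sub_zero, h2]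
    field_simp
  have hd1 : ‖d‖ ≤ 1 := by
    have := Complex.norm_deriv_le_one_of_mapsTo_ball hFdiff
      (by rw [hF0]; exact hmaps.mono_right ball_subset_closedBall) one_pos
    rwa [hd.deriv] at this
  -- the first coefficient
  have hc1 : taylorCoeff f 1 = deriv f 0 := by
    simp [taylorCoeff, iteratedDeriv_one]
  have hf0 : f 0 = Complex.exp a := hfg 0 h0
  have hf0d : HasDerivAt f (Complex.exp a * g'0) 0 := by
    have hexp : HasDerivAt (fun z => Complex.exp (g z)) (Complex.exp (g 0) * g'0) 0 := by
      exact hg0.cexp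
    apply hexp.congr_of_eventuallyEq
    filter_upwards [hopen.mem_nhds h0] with w hw
    exact hfg w hw
  have hderiv_f0 : deriv f 0 = Complex.exp a * g'0 := hf0d.deriv
  have hg'0d : g'0 = d * (2 * (a.re : ℂ)) := by
    rw [hd_def]; field_simp
  have habs_c1 : ‖taylorCoeff f 1‖
      = 2 * (x * (Real.exp x)⁻¹) * ‖d‖ := by
    rw [hc1, hderiv_f0, hg'0d]
    rw [norm_mul, norm_mul, Complex.norm_exp]
    have h4 : ‖2 * (a.re : ℂ)‖ = 2 * x := by
      rw [norm_mul]
      simp [abs_of_neg hare, hx_def]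
    rw [h4]
    rw [show a.re = -x by simp [hx_def], Real.exp_neg]
    ring
  have hxe : x * (Real.exp x)⁻¹ ≤ (Real.exp 1)⁻¹ := by
    have h5 : x ≤ Real.exp (x - 1) := by
      have := Real.add_one_le_exp (x - 1)
      linarith
    rw [Real.exp_sub] at h5
    have hex : (0:ℝ) < Real.exp x := Real.exp_pos x
    calc x * (Real.exp x)⁻¹ ≤ (Real.exp x / Real.exp 1) * (Real.exp x)⁻¹ := by
          exact mul_le_mul_of_nonneg_right h5 (inv_nonneg.2 hex.le)
      _ = (Real.exp 1)⁻¹ := by field_simp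
  have hxe_pos : 0 < x * (Real.exp x)⁻¹ := by positivity
  constructor
  · rw [habs_c1]
    have : 2 * (x * (Real.exp x)⁻¹) * ‖d‖ ≤ 2 * (Real.exp 1)⁻¹ * 1 := by
      apply mul_le_mul _ hd1 (norm_nonneg d) (by positivity)
      nlinarith
    calc 2 * (x * (Real.exp x)⁻¹) * ‖d‖ ≤ 2 * (Real.exp 1)⁻¹ * 1 := this
      _ = 2 / Real.exp 1 := by field_simp
  · intro hEq
    -- equality forces x = 1 and |d| = 1
    have he1 : (0:ℝ) < Real.exp 1 := Real.exp_pos 1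
    rw [habs_c1] at hEq
    have h2e : 2 / Real.exp 1 = 2 * (Real.exp 1)⁻¹ := by field_simp
    rw [h2e] at hEq
    have hdge : ‖d‖ = 1 := by
      by_contra hlt
      have : ‖d‖ < 1 := lt_of_le_of_ne hd1 hlt
      nlinarith [hxe_pos, hxe]
    have hteq : x * (Real.exp x)⁻¹ = (Real.exp 1)⁻¹ := by
      rw [hdge] at hEq
      nlinarith
    have hx1 : x = 1 := by
      by_contra hne1
      have h5 : x < Real.exp (x - 1) := by
        have := Real.add_one_lt_exp (show x - 1 ≠ 0 from sub_ne_zero.mpr hne1)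
        linarith
      rw [Real.exp_sub] at h5
      have hex : (0:ℝ) < Real.exp x := Real.exp_pos x
      have h6 : x * (Real.exp x)⁻¹ < (Real.exp 1)⁻¹ := by
        calc x * (Real.exp x)⁻¹ < (Real.exp x / Real.exp 1) * (Real.exp x)⁻¹ :=
              mul_lt_mul_of_pos_right h5 (inv_pos.2 hex)
          _ = (Real.exp 1)⁻¹ := by field_simp
      exact absurd hteq h6.ne
    -- Schwarz equality: F z = d * z on the ball
    set G : ℂ → ℂ := dslope F 0 with hG_def
    have hGdiff : DifferentiableOn ℂ G (ball (0:ℂ) 1) :=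
      (Complex.differentiableOn_dslope (ball_mem_nhds _ one_pos)).mpr hFdiff
    have hG0 : G 0 = d := by rw [hG_def, dslope_same, hd.deriv]
    have hGle : ∀ z ∈ ball (0:ℂ) 1, ‖G z‖ ≤ 1 := by
      intro z hz
      rcases eq_or_ne z 0 with rfl | hz0
      · rw [hG0, hdge]
      · rw [hG_def, dslope_of_ne F hz0, slope_def_field, hF0, sub_zero, sub_zero, norm_div]
        rw [div_le_one (norm_pos_iff.2 hz0)]
        exact Complex.norm_le_norm_of_mapsTo_ball hFdiff
          (hmaps.mono_right ball_subset_closedBall) hF0 (by rwa [← mem_ball_zero_iff])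
    have hmax : IsMaxOn (norm ∘ G) (ball (0:ℂ) 1) 0 := by
      intro z hz
      simp only [Function.comp_apply, hG0, hdge]
      exact hGle z hz
    have hGconst := Complex.eqOn_of_isPreconnected_of_isMaxOn_norm
      (convex_ball (0:ℂ) 1).isPreconnected isOpen_ball hGdiff h0 hmax
    have hFz : ∀ z ∈ ball (0:ℂ) 1, F z = d * z := by
      intro z hz
      rcases eq_or_ne z 0 with rfl | hz0
      · rw [hF0, mul_zero]
      · have := hGconst hz
        simp only [Function.const_apply, hG0] at this
        rw [hG_def, dslope_of_ne F hz0, slope_def_field, hF0, sub_zero, sub_zero] at this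
        field_simp at this
        linear_combination this
    -- unravel g and f
    have hare1 : a.re = -1 := by rw [← neg_neg a.re, ← hx_def, hx1]
    have ha : a = -1 + (a.im : ℂ) * Complex.I := by
      have h := Complex.re_add_im a
      rw [hare1] at h
      push_cast at h
      linear_combination -h
    set ta : ℂ := ((a.im : ℝ) : ℂ) with hta_def
    have ha' : a = -1 + ta * Complex.I := ha
    have hconj : (starRingEnd ℂ) a = -1 - ta * Complex.I := by
      apply Complex.ext <;> simp [hta_def, hare1]
    refine ⟨(-d).arg, a.im, ?_⟩
    intro z hz
    have hz1 : ‖z‖ < 1 := by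
      rwa [mem_ball_zero_iff] at hz
    have habsd : ‖-d‖ = 1 := by rwa [norm_neg]
    have hexpα : Complex.exp (Complex.I * (((-d).arg : ℝ) : ℂ)) = -d := by
      have h := Complex.norm_mul_exp_arg_mul_I (-d)
      rw [habsd] at h
      push_cast at h
      rw [one_mul] at h
      rw [mul_comm]
      exact h
    have hdz : (1:ℂ) - d * z ≠ 0 := by
      intro h
      have h1 : d * z = 1 := by linear_combination -h
      have h2 : ‖d * z‖ = 1 := by rw [h1]; simp
      rw [norm_mul, hdge, one_mul] at h2
      rw [h2] at hz1
      exact lt_irrefl 1 hz1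
    have hdz' : -(d * z) + 1 ≠ 0 := by
      intro h; exact hdz (by linear_combination h)
    have hkey : g z * (1 - d * z) = a + d * z * (starRingEnd ℂ) a := by
      have hFz' := hFz z hz
      rw [hF_def] at hFz'
      simp only at hFz'
      rw [div_eq_iff (hden z hz)] at hFz'
      linear_combination hFz'
    have h8 : (Complex.I * ta + (-(d * z) - 1) / (-(d * z) + 1)) * (1 - d * z)
        = a + d * z * (starRingEnd ℂ) a := by
      rw [hconj, ha']
      field_simp [hdz']
      ring
    have hgoal : g z = Complex.I * ta + (-(d * z) - 1) / (-(d * z) + 1) :=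
      mul_right_cancel₀ hdz (by rw [hkey, ← h8])
    rw [hfg z hz]
    simp only [kappa0]
    rw [hexpα, neg_mul, ← Complex.exp_add, hgoal]
end

section
/- Among all holomorphic universal covering maps of the punctured disk, κ₀ and its rotations maximize the modulus of the derivative at the origin: if p : Δ → Δ* is a holomorphic covering map of Δ onto the punctured disk Δ*, then |p′(0)| ≤ 2/e, with equality if and only if p(z) = e^{iα₁} κ₀(e^{iα} z) for some real α, α₁. -/
open Metric Set Complex ComplexConjugate


/-- A holomorphic function on the unit ball has a primitive there. -/
lemma exists_primitive (h : ℂ → ℂ) (hd : DifferentiableOn ℂ h (ball (0:ℂ) 1)) :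
    ∃ G : ℂ → ℂ, G 0 = 0 ∧ ∀ z ∈ ball (0:ℂ) 1, HasDerivAt G (h z) z := by
  -- the fixed power series
  set P : FormalMultilinearSeries ℂ ℂ ℂ := cauchyPowerSeries h 0 (1/2) with hP
  have key : ∀ r : NNReal, 0 < r → (r:ℝ) < 1 → HasFPowerSeriesOnBall h P 0 r := by
    intro r hr0 hr1
    have hsub : closedBall (0:ℂ) r ⊆ ball (0:ℂ) 1 := closedBall_subset_ball hr1
    have H : HasFPowerSeriesOnBall h (cauchyPowerSeries h 0 r) 0 r :=
      (hd.mono hsub).hasFPowerSeriesOnBall hr0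
    have H2 : HasFPowerSeriesOnBall h P 0 (1/2 : NNReal) := by
      have hsub2 : closedBall (0:ℂ) ((1/2 : NNReal):ℝ) ⊆ ball (0:ℂ) 1 := by
        apply closedBall_subset_ball; norm_num
      exact (hd.mono hsub2).hasFPowerSeriesOnBall (by norm_num)
    have : cauchyPowerSeries h 0 r = P :=
      H.hasFPowerSeriesAt.eq_formalMultilinearSeries H2.hasFPowerSeriesAt
    rwa [this] at H
  have hrad : ∀ r : NNReal, (r:ℝ) < 1 → (r : ENNReal) < P.radius := by
    intro r hr1
    set r' : NNReal := ⟨((r:ℝ) + 1)/2, by positivity⟩ with hr'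
    have hr'val : (r':ℝ) = ((r:ℝ) + 1)/2 := rfl
    have h1 : (r:ℝ) < (r':ℝ) := by rw [hr'val]; linarith
    have h2 : (r':ℝ) < 1 := by rw [hr'val]; linarith
    have h0 : 0 < r' := by
      have : (0:ℝ) < (r':ℝ) := lt_of_le_of_lt r.2 h1
      exact_mod_cast this
    calc (r : ENNReal) < r' := by exact_mod_cast h1
      _ ≤ P.radius := (key r' h0 h2).r_le
  refine ⟨fun z => ∑' n : ℕ, (P.coeff n / (n+1)) * z^(n+1), ?_, ?_⟩
  · simp
  · intro z hz
    rw [mem_ball_zero_iff] at hz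
    set r : NNReal := ⟨(‖z‖ + 1)/2, by positivity⟩ with hrdef
    have hrre : (r:ℝ) = (‖z‖ + 1)/2 := rfl
    have hzr : ‖z‖ < (r:ℝ) := by rw [hrre]; linarith
    have hr1 : (r:ℝ) < 1 := by rw [hrre]; linarith
    have hsum : ∀ y : ℂ, ‖y‖ < r → HasSum (fun n => P.coeff n * y ^ n) (h y) := by
      intro y hy
      have hr0 : 0 < r := by
        have : (0:ℝ) < (r:ℝ) := lt_of_le_of_lt (norm_nonneg y) hy
        exact_mod_cast this
      have Hz := (key r hr0 hr1).hasSum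
        (y := y) (by
          rw [EMetric.mem_ball, edist_zero_right]
          exact_mod_cast (by exact_mod_cast hy : ‖y‖₊ < r))
      simp only [zero_add] at Hz
      have : (fun n => P n fun _ => y) = fun n => P.coeff n * y ^ n := by
        funext n
        rw [FormalMultilinearSeries.apply_eq_pow_smul_coeff, smul_eq_mul]; ring
      rwa [this] at Hz
    have hsummable : Summable fun n => ‖P n‖ * (r:ℝ) ^ n :=
      P.summable_norm_mul_pow (hrad r hr1)
    have hder := hasDerivAt_tsum_of_isPreconnected (u := fun n => ‖P n‖ * (r:ℝ)^n)
      (g := fun n y => (P.coeff n / (n+1)) * y^(n+1))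
      (g' := fun n y => P.coeff n * y^n)
      hsummable isOpen_ball (convex_ball (0:ℂ) (r:ℝ)).isPreconnected
      (fun n y _ => by
        have := (hasDerivAt_pow (n+1) y).const_mul (P.coeff n / (n+1))
        refine this.congr_deriv ?_
        have hne : ((n:ℂ)+1) ≠ 0 := by exact_mod_cast Nat.succ_ne_zero n
        simp only [Nat.add_sub_cancel]
        push_cast
        field_simp)
      (fun n y hy => by
        rw [mem_ball_zero_iff] at hy
        have h1 : ‖P.coeff n * y ^ n‖ ≤ ‖P.coeff n‖ * (r:ℝ)^n := by
          rw [norm_mul, norm_pow]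
          exact mul_le_mul_of_nonneg_left
            (pow_le_pow_left₀ (norm_nonneg y) hy.le n) (norm_nonneg _)
        refine h1.trans (mul_le_mul_of_nonneg_right ?_ (by positivity))
        have h3 := (P n).le_opNorm (1 : (Fin n) → ℂ)
        simp only [Pi.one_apply, norm_one, Finset.prod_const_one, mul_one] at h3
        exact h3)
      (Metric.mem_ball_self (lt_of_le_of_lt (norm_nonneg z) hzr))
      (by
        apply Summable.congr summable_zero
        intro n; simp)
      (by rw [mem_ball_zero_iff]; exact hzr)
    have : (∑' n, P.coeff n * z^n) = h z := (hsum z hzr).tsum_eq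
    rwa [this] at hder

/-- A nonvanishing holomorphic function on the unit ball has a holomorphic logarithm. -/
lemma exists_log (p : ℂ → ℂ) (hp : DifferentiableOn ℂ p (ball (0:ℂ) 1))
    (hne : ∀ z ∈ ball (0:ℂ) 1, p z ≠ 0) :
    ∃ g : ℂ → ℂ, (∀ z ∈ ball (0:ℂ) 1, HasDerivAt g (deriv p z / p z) z) ∧
      ∀ z ∈ ball (0:ℂ) 1, p z = Complex.exp (g z) := by
  have hball : IsOpen (ball (0:ℂ) 1) := isOpen_ball
  have hderiv : DifferentiableOn ℂ (deriv p) (ball (0:ℂ) 1) :=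
    ((hp.analyticOnNhd hball).deriv).differentiableOn
  have hdiv : DifferentiableOn ℂ (fun z => deriv p z / p z) (ball (0:ℂ) 1) :=
    hderiv.div hp hne
  obtain ⟨G, hG0, hG⟩ := exists_primitive _ hdiv
  have hpz : ∀ z ∈ ball (0:ℂ) 1, HasDerivAt p (deriv p z) z := fun z hz =>
    (hp.differentiableAt (hball.mem_nhds hz)).hasDerivAt
  -- E = p * exp (-G) has zero derivative
  set E : ℂ → ℂ := fun z => p z * Complex.exp (-(G z)) with hE
  have hEderiv : ∀ z ∈ ball (0:ℂ) 1, HasDerivAt E 0 z := by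
    intro z hz
    have h1 : HasDerivAt (fun w => Complex.exp (-(G w)))
        (Complex.exp (-(G z)) * (-(deriv p z / p z))) z := ((hG z hz).neg).cexp
    have h2 := (hpz z hz).mul h1
    refine h2.congr_deriv ?_
    have hpz' : p z * (deriv p z / p z) = deriv p z := by field_simp [hne z hz]
    linear_combination (-Complex.exp (-(G z))) * hpz'
  have hconst : ∀ z ∈ ball (0:ℂ) 1, E z = E 0 := by
    intro z hz
    have h0 : (0:ℂ) ∈ ball (0:ℂ) 1 := mem_ball_self one_pos
    have := (convex_ball (0:ℂ) 1).norm_image_sub_le_of_norm_hasDerivWithin_le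
      (f := E) (f' := fun _ => 0) (C := 0)
      (fun x hx => (hEderiv x hx).hasDerivWithinAt) (fun x _ => by simp) h0 hz
    have h5 : ‖E z - E 0‖ ≤ 0 := by simpa using this
    have h6 : E z - E 0 = 0 := by
      have := le_antisymm h5 (norm_nonneg _)
      exact norm_eq_zero.mp this
    linear_combination h6
  have hp0 : p 0 ≠ 0 := hne 0 (mem_ball_self one_pos)
  refine ⟨fun z => Complex.log (p 0) + G z, fun z hz => (hG z hz).const_add _, ?_⟩
  intro z hz
  have h3 : p z * Complex.exp (-(G z)) = p 0 := by
    have := hconst z hz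
    simpa [hE, hG0] using this
  rw [Complex.exp_add, Complex.exp_log hp0]
  have h4 : Complex.exp (-(G z)) * Complex.exp (G z) = 1 := by
    rw [← Complex.exp_add]; simp
  calc p z = p z * (Complex.exp (-(G z)) * Complex.exp (G z)) := by rw [h4, mul_one]
    _ = (p z * Complex.exp (-(G z))) * Complex.exp (G z) := by ring
    _ = p 0 * Complex.exp (G z) := by rw [h3]

lemma aux_t (t : ℝ) (ht : 0 < t) : t * Real.exp (-t) ≤ Real.exp (-1) ∧
    (t * Real.exp (-t) = Real.exp (-1) → t = 1) := by
  have h1 : t ≤ Real.exp (t - 1) := by have := Real.add_one_le_exp (t-1); linarith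
  have hmul : Real.exp (t-1) * Real.exp (-t) = Real.exp (-1) := by
    rw [← Real.exp_add]; ring_nf
  constructor
  · calc t * Real.exp (-t) ≤ Real.exp (t-1) * Real.exp (-t) :=
        mul_le_mul_of_nonneg_right h1 (Real.exp_pos _).le
      _ = Real.exp (-1) := hmul
  · intro heq
    by_contra hne
    have h2 : t < Real.exp (t-1) := by
      have := Real.add_one_lt_exp (sub_ne_zero.mpr hne); linarith
    have h3 : t * Real.exp (-t) < Real.exp (t-1) * Real.exp (-t) :=
      mul_lt_mul_of_pos_right h2 (Real.exp_pos _)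
    rw [hmul, heq] at h3
    exact lt_irrefl _ h3


/-- Among all holomorphic covering maps `p : Δ → Δ*` of the punctured disk,
`κ₀` and its rotations maximize `|p′(0)|`: one has `|p′(0)| ≤ 2/e`, with
equality iff `p(z) = e^{iα₁} κ₀(e^{iα} z)` for some real `α, α₁`. -/
theorem covering_map_deriv_max
    (p : ℂ → ℂ)
    (hp : DifferentiableOn ℂ p (Metric.ball (0 : ℂ) 1))
    (hmaps : Set.MapsTo p (Metric.ball (0 : ℂ) 1) (Metric.ball (0 : ℂ) 1 \ {0}))
    (hsurj : Set.SurjOn p (Metric.ball (0 : ℂ) 1) (Metric.ball (0 : ℂ) 1 \ {0}))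
    (hcov : IsCoveringMap
      (Set.MapsTo.restrict p (Metric.ball (0 : ℂ) 1) (Metric.ball (0 : ℂ) 1 \ {0}) hmaps)) :
    ‖deriv p 0‖ ≤ 2 / Real.exp 1 ∧
      (‖deriv p 0‖ = 2 / Real.exp 1 ↔
        ∃ α α₁ : ℝ, ∀ z ∈ Metric.ball (0 : ℂ) 1,
          p z = Complex.exp (Complex.I * (α₁ : ℂ)) *
            kappa0 (Complex.exp (Complex.I * (α : ℂ)) * z)) := by
  have hball : IsOpen (ball (0:ℂ) 1) := isOpen_ball
  have h0mem : (0:ℂ) ∈ ball (0:ℂ) 1 := mem_ball_self one_pos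
  have hne : ∀ z ∈ ball (0:ℂ) 1, p z ≠ 0 := by
    intro z hz h
    exact (hmaps hz).2 (by simp [h])
  have hlt1 : ∀ z ∈ ball (0:ℂ) 1, ‖p z‖ < 1 := by
    intro z hz
    have := (hmaps hz).1
    rwa [mem_ball_zero_iff] at this
  obtain ⟨g, hgderiv, hgexp⟩ := exists_log p hp hne
  have hgdiff : DifferentiableOn ℂ g (ball (0:ℂ) 1) :=
    fun z hz => (hgderiv z hz).differentiableAt.differentiableWithinAt
  have hre : ∀ z ∈ ball (0:ℂ) 1, (g z).re < 0 := by
    intro z hz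
    have h1 : ‖Complex.exp (g z)‖ < 1 := by
      rw [← hgexp z hz]; exact hlt1 z hz
    rw [Complex.norm_exp] at h1
    exact (Real.exp_lt_one_iff).mp h1
  set w0 := g 0 with hw0def
  have ha : w0.re < 0 := hre 0 h0mem
  set d := deriv p 0 / p 0 with hddef
  have hgd : HasDerivAt g d 0 := hgderiv 0 h0mem
  have hpd : HasDerivAt p (Complex.exp w0 * d) 0 := by
    have h1 : HasDerivAt (fun z => Complex.exp (g z)) (Complex.exp (g 0) * d) 0 := hgd.cexp
    apply h1.congr_of_eventuallyEq
    filter_upwards [hball.mem_nhds h0mem] with z hz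
    exact hgexp z hz
  have hderiv_p0 : deriv p 0 = Complex.exp w0 * d := hpd.deriv
  have habs : ‖deriv p 0‖ = Real.exp w0.re * ‖d‖ := by
    rw [hderiv_p0, norm_mul, Complex.norm_exp]
  -- the Möbius map φ
  have hden : ∀ z ∈ ball (0:ℂ) 1, g z + conj w0 ≠ 0 := by
    intro z hz h
    have h2 := congrArg Complex.re h
    simp only [Complex.add_re, Complex.conj_re, Complex.zero_re] at h2
    have := hre z hz
    linarith
  set φ : ℂ → ℂ := fun z => (g z - w0) / (g z + conj w0) with hφdef
  have hφ0 : φ 0 = 0 := by simp [hφdef, hw0def]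
  have hφdiff : DifferentiableOn ℂ φ (ball (0:ℂ) 1) :=
    ((hgdiff.sub_const w0).div (hgdiff.add_const (conj w0)) hden)
  have hφmaps : MapsTo φ (ball (0:ℂ) 1) (ball (φ 0) 1) := by
    rw [hφ0]
    intro z hz
    rw [mem_ball_zero_iff, hφdef]
    have hx := hre z hz
    have hda : 0 < ‖g z + conj w0‖ :=
      norm_pos_iff.mpr (hden z hz)
    rw [norm_div, div_lt_one hda]
    have hsq : (‖g z - w0‖)^2 < (‖g z + conj w0‖)^2 := by
      rw [Complex.sq_norm, Complex.sq_norm, Complex.normSq_apply, Complex.normSq_apply]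
      simp only [Complex.sub_re, Complex.sub_im, Complex.add_re, Complex.add_im,
        Complex.conj_re, Complex.conj_im]
      nlinarith [mul_pos (neg_pos.mpr hx) (neg_pos.mpr ha)]
    exact lt_of_pow_lt_pow_left₀ 2 (norm_nonneg _) hsq
  have hane : w0 + conj w0 ≠ 0 := by
    have := hden 0 h0mem
    rwa [← hw0def] at this
  have hw0sum : w0 + conj w0 = ((2 * w0.re : ℝ) : ℂ) := Complex.add_conj w0
  have hφd : HasDerivAt φ (d / ((2 * w0.re : ℝ) : ℂ)) 0 := by
    have h1 : HasDerivAt (fun z => g z - w0) d 0 := hgd.sub_const _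
    have h2 : HasDerivAt (fun z => g z + conj w0) d 0 := hgd.add_const _
    have h3 := h1.div h2 (hden 0 h0mem)
    refine h3.congr_deriv ?_
    rw [← hw0def, ← hw0sum]
    rw [show g 0 = w0 from rfl] at *
    field_simp
    ring
  have hschwarz := Complex.norm_deriv_le_div_of_mapsTo_ball hφdiff (hφmaps.mono_right ball_subset_closedBall) one_pos
  have hdbound : ‖d‖ ≤ 2 * (-w0.re) := by
    rw [hφd.deriv, norm_div] at hschwarz
    have habs2 : ‖(((2 * w0.re : ℝ) : ℂ))‖ = 2 * (-w0.re) := by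
      rw [Complex.norm_real, Real.norm_eq_abs, abs_of_neg (by linarith : 2 * w0.re < 0)]
      ring
    rw [habs2] at hschwarz
    have hpos : 0 < 2 * (-w0.re) := by linarith
    exact (div_le_one hpos).mp (by linarith)
  set t : ℝ := -w0.re with htdef
  have ht : 0 < t := by simp [htdef]; linarith
  have key1 : ‖deriv p 0‖ ≤ 2 * (t * Real.exp (-t)) := by
    rw [habs]
    have : Real.exp w0.re * ‖d‖ ≤ Real.exp w0.re * (2 * t) :=
      mul_le_mul_of_nonneg_left hdbound (Real.exp_pos _).le
    calc Real.exp w0.re * ‖d‖ ≤ Real.exp w0.re * (2 * t) := this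
      _ = 2 * (t * Real.exp (-t)) := by rw [show -t = w0.re by simp [htdef]]; ring
  have key2 := aux_t t ht
  have h2e : (2:ℝ) / Real.exp 1 = 2 * Real.exp (-1) := by
    rw [Real.exp_neg]; ring
  constructor
  · calc ‖deriv p 0‖ ≤ 2 * (t * Real.exp (-t)) := key1
      _ ≤ 2 * Real.exp (-1) := by linarith [key2.1]
      _ = 2 / Real.exp 1 := h2e.symm
  · constructor
    · -- forward: equality implies rotation form
      intro heq
      have e1 : Real.exp (-1) ≤ t * Real.exp (-t) := by
        rw [heq, h2e] at key1; linarith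
      have ht1 : t = 1 := key2.2 (le_antisymm key2.1 e1)
      have ha1 : w0.re = -1 := by
        have : -w0.re = 1 := by rw [← htdef, ht1]
        linarith
      have hd2 : ‖d‖ = 2 := by
        have h := habs
        rw [heq, ha1, h2e] at h
        have hep : Real.exp (-1) ≠ 0 := (Real.exp_pos _).ne'
        have h' : Real.exp (-1) * 2 = Real.exp (-1) * ‖d‖ := by
          linear_combination h
        exact (mul_left_cancel₀ hep h').symm
      set s : ℝ := w0.im with hsdef
      have hw0eq : w0 = -1 + (s:ℂ)*I := by
        rw [← Complex.re_add_im w0, ha1, hsdef]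
        push_cast
        ring
      set g₁ : ℂ → ℂ := fun z => g z - (s:ℂ)*I with hg₁def
      have hg₁0 : g₁ 0 = -1 := by
        simp only [hg₁def, ← hw0def, hw0eq]
        ring
      have hg₁re : ∀ z, (g₁ z).re = (g z).re := by
        intro z
        simp [hg₁def]
      have hden1 : ∀ z ∈ ball (0:ℂ) 1, (1 : ℂ) - g₁ z ≠ 0 := by
        intro z hz h
        have h2 := congrArg Complex.re h
        rw [Complex.sub_re, Complex.one_re, hg₁re, Complex.zero_re] at h2
        have := hre z hz
        linarith
      set h₁ : ℂ → ℂ := fun z => (1 + g₁ z)/(1 - g₁ z) with hh₁def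
      have hh₁0 : h₁ 0 = 0 := by
        simp only [hh₁def, hg₁0]
        norm_num
      have hg₁diff : DifferentiableOn ℂ g₁ (ball (0:ℂ) 1) := hgdiff.sub_const _
      have hh₁diff : DifferentiableOn ℂ h₁ (ball (0:ℂ) 1) :=
        (hg₁diff.const_add 1).div (hg₁diff.const_sub 1) hden1
      have hh₁maps : MapsTo h₁ (ball (0:ℂ) 1) (ball (h₁ 0) 1) := by
        rw [hh₁0]
        intro z hz
        rw [mem_ball_zero_iff, hh₁def]
        have hx : (g₁ z).re < 0 := by rw [hg₁re]; exact hre z hz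
        have hda : 0 < ‖1 - g₁ z‖ := norm_pos_iff.mpr (hden1 z hz)
        rw [norm_div, div_lt_one hda]
        have hsq : (‖1 + g₁ z‖)^2 < (‖1 - g₁ z‖)^2 := by
          rw [Complex.sq_norm, Complex.sq_norm, Complex.normSq_apply, Complex.normSq_apply]
          simp only [Complex.add_re, Complex.add_im, Complex.sub_re, Complex.sub_im,
            Complex.one_re, Complex.one_im]
          nlinarith [hx]
        exact lt_of_pow_lt_pow_left₀ 2 (norm_nonneg _) hsq
      have hgd1 : HasDerivAt g₁ d 0 := hgd.sub_const _
      have hh₁d : HasDerivAt h₁ (d/2) 0 := by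
        have hnum : HasDerivAt (fun z => (1:ℂ) + g₁ z) d 0 := hgd1.const_add 1
        have hdenD : HasDerivAt (fun z => (1:ℂ) - g₁ z) (-d) 0 := hgd1.const_sub 1
        have hq := hnum.div hdenD (hden1 0 h0mem)
        refine hq.congr_deriv ?_
        rw [show g₁ 0 = -1 from hg₁0]
        norm_num
        ring
      set c₀ : ℂ := d/2 with hc₀def
      have habs_c : ‖c₀‖ = 1 := by
        rw [hc₀def, norm_div, hd2]
        norm_num
      have hdslope : ‖dslope h₁ 0 0‖ = 1/1 := by
        rw [dslope_same, hh₁d.deriv, habs_c]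
        norm_num
      have hEq := Complex.affine_of_mapsTo_ball_of_exists_norm_dslope_eq_div
        hh₁diff (hh₁maps.mono_right ball_subset_closedBall) h0mem hdslope
      have hc0exp : Complex.exp (I * ((c₀.arg : ℝ) : ℂ)) = c₀ := by
        have h6 := Complex.norm_mul_exp_arg_mul_I c₀
        rw [habs_c] at h6
        rw [mul_comm]
        simpa using h6
      refine ⟨c₀.arg, s, ?_⟩
      intro z hz
      have hz1 : h₁ z = c₀ * z := by
        have h7 := hEq hz
        simp only [hh₁0, smul_eq_mul, sub_zero, zero_add, dslope_same, hh₁d.deriv] at h7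
        rw [h7]
        ring
      have hdz : (1:ℂ) - g₁ z ≠ 0 := hden1 z hz
      have h5 : 1 + g₁ z = c₀ * z * (1 - g₁ z) := by
        rw [show h₁ z = (1 + g₁ z)/(1 - g₁ z) from rfl] at hz1
        rwa [div_eq_iff hdz] at hz1
      have hcz : c₀ * z + 1 ≠ 0 := by
        intro h
        have h8 : c₀ * z = -1 := by linear_combination h
        have h9 : ‖c₀ * z‖ = 1 := by rw [h8]; simp
        rw [norm_mul, habs_c, one_mul] at h9
        have h10 : ‖z‖ < 1 := by
          have := hz
          rwa [mem_ball_zero_iff] at this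
        linarith
      have hsolve : g₁ z = (c₀*z - 1)/(c₀*z + 1) := by
        rw [eq_div_iff hcz]
        linear_combination h5
      rw [hgexp z hz]
      have hgz : g z = I*(s:ℂ) + (c₀*z - 1)/(c₀*z + 1) := by
        rw [← hsolve, hg₁def]
        ring
      rw [hgz, Complex.exp_add]
      congr 1
      simp [kappa0, hc0exp]
    · -- backward: rotation form implies equality
      rintro ⟨α, α₁, hform⟩
      set e : ℂ := Complex.exp (I*(α:ℂ)) with hedef
      have hnum : HasDerivAt (fun z : ℂ => e*z - 1) e 0 := by
        simpa using ((hasDerivAt_id (0:ℂ)).const_mul e).sub_const 1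
      have hdenD : HasDerivAt (fun z : ℂ => e*z + 1) e 0 := by
        simpa using ((hasDerivAt_id (0:ℂ)).const_mul e).add_const 1
      have hdenne : e * 0 + 1 ≠ 0 := by norm_num
      have hq := hnum.div hdenD hdenne
      have hq' : HasDerivAt (fun z : ℂ => (e*z-1)/(e*z+1)) (2*e) 0 := by
        refine hq.congr_deriv ?_
        norm_num
        ring
      have hexp := hq'.cexp
      have hval : (e*0-1)/(e*0+1) = -1 := by norm_num
      rw [hval] at hexp
      have hfull := hexp.const_mul (Complex.exp (I*(α₁:ℂ)))
      have hpd2 : HasDerivAt p (Complex.exp (I*(α₁:ℂ)) * (Complex.exp (-1) * (2*e))) 0 := by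
        apply hfull.congr_of_eventuallyEq
        filter_upwards [hball.mem_nhds h0mem] with z hz
        rw [hform z hz]
        simp [kappa0, hedef]
      rw [hpd2.deriv, norm_mul, norm_mul, norm_mul]
      have h11 : ‖Complex.exp (I*(α₁:ℂ))‖ = 1 := by
        rw [Complex.norm_exp]
        simp
      have h12 : ‖Complex.exp (-1 : ℂ)‖ = Real.exp (-1) := by
        rw [Complex.norm_exp]
        simp
      rw [h11, h12, h2e]
      simp only [hedef, Complex.norm_exp]
      simp
      ring
end

section
/- (Lemma 3.10.) Let f be a bounded holomorphic function on Δ and define f_t(z) = f(t·z) for t, z ∈ Δ. Then the map χ_f : t ↦ f_t is a holomorphic map from Δ into the Banach space H^∞: for each t₀ ∈ Δ the function z ↦ z·f′(t₀·z) is bounded and holomorphic on Δ, and there exist δ > 0 and C > 0 such that sup_{z∈Δ} |f(t·z) − f(t₀·z) − (t − t₀)·z·f′(t₀·z)| ≤ C·|t − t₀|² whenever |t − t₀| < δ and t ∈ Δ. -/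
open Metric Set

/-- Lemma 3.10: for a bounded holomorphic `f` on `Δ`, the homotopy map
`χ_f : t ↦ f_t`, `f_t(z) = f(t·z)`, is a holomorphic map `Δ → H^∞`: its
derivative at `t₀` is the bounded holomorphic function `z ↦ z·f′(t₀·z)`, with
a quadratic sup-norm error bound. -/
theorem lemma_3_10
    (f : ℂ → ℂ) (M : ℝ)
    (hf : DifferentiableOn ℂ f (Metric.ball (0 : ℂ) 1))
    (hb : ∀ z ∈ Metric.ball (0 : ℂ) 1, ‖f z‖ ≤ M)
    (t₀ : ℂ) (ht₀ : t₀ ∈ Metric.ball (0 : ℂ) 1) :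
    DifferentiableOn ℂ (fun z => z * deriv f (t₀ * z)) (Metric.ball (0 : ℂ) 1) ∧
    (∃ M' : ℝ, ∀ z ∈ Metric.ball (0 : ℂ) 1,
      ‖z * deriv f (t₀ * z)‖ ≤ M') ∧
    ∃ δ > (0 : ℝ), ∃ C > (0 : ℝ), ∀ t ∈ Metric.ball (0 : ℂ) 1,
      ‖t - t₀‖ < δ →
      ∀ z ∈ Metric.ball (0 : ℂ) 1,
        ‖f (t * z) - f (t₀ * z) - (t - t₀) * z * deriv f (t₀ * z)‖ ≤
          C * ‖t - t₀‖ ^ 2 := by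
  have ht₀' : ‖t₀‖ < 1 := by
    simpa [Complex.dist_eq] using ht₀
  -- f is analytic on the ball, hence its derivatives are holomorphic there
  have hfa : AnalyticOnNhd ℂ f (Metric.ball (0 : ℂ) 1) :=
    hf.analyticOnNhd Metric.isOpen_ball
  have hfd : AnalyticOnNhd ℂ (deriv f) (Metric.ball (0 : ℂ) 1) := hfa.deriv
  have hfd2 : AnalyticOnNhd ℂ (deriv (deriv f)) (Metric.ball (0 : ℂ) 1) := hfd.deriv
  have hfd' : DifferentiableOn ℂ (deriv f) (Metric.ball (0 : ℂ) 1) :=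
    hfd.differentiableOn
  -- maps
  have hmaps : ∀ z ∈ Metric.ball (0 : ℂ) 1, t₀ * z ∈ Metric.ball (0 : ℂ) 1 := by
    intro z hz
    have hz' : ‖z‖ < 1 := by simpa [Complex.dist_eq] using hz
    have : ‖t₀ * z‖ ≤ ‖z‖ := by
      rw [norm_mul]
      calc ‖t₀‖ * ‖z‖ ≤ 1 * ‖z‖ := by
            exact mul_le_mul_of_nonneg_right ht₀'.le (norm_nonneg z)
        _ = ‖z‖ := one_mul _
    simpa [Complex.dist_eq] using lt_of_le_of_lt this hz'
  refine ⟨?_, ?_, ?_⟩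
  · -- differentiability of z ↦ z * f'(t₀ z)
    apply DifferentiableOn.mul differentiableOn_id
    exact (hfd'.comp ((differentiableOn_id.const_mul t₀)) hmaps)
  · -- boundedness: f' is continuous on the compact closed ball of radius |t₀|
    have hsub : Metric.closedBall (0 : ℂ) (‖t₀‖) ⊆ Metric.ball (0 : ℂ) 1 := by
      intro w hw
      simp only [Metric.mem_closedBall, Metric.mem_ball, Complex.dist_eq, sub_zero] at *
      exact lt_of_le_of_lt hw ht₀'
    have hc : ContinuousOn (deriv f) (Metric.closedBall (0 : ℂ) (‖t₀‖)) :=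
      (hfd'.continuousOn).mono hsub
    obtain ⟨M', hM'⟩ := (isCompact_closedBall (0 : ℂ) _).exists_bound_of_continuousOn hc
    refine ⟨max M' 0, fun z hz => ?_⟩
    have hz' : ‖z‖ < 1 := by simpa [Complex.dist_eq] using hz
    have hmem : t₀ * z ∈ Metric.closedBall (0 : ℂ) (‖t₀‖) := by
      simp only [Metric.mem_closedBall, Complex.dist_eq, sub_zero, norm_mul]
      exact mul_le_of_le_one_right (norm_nonneg _) hz'.le
    calc ‖z * deriv f (t₀ * z)‖
        = ‖z‖ * ‖deriv f (t₀ * z)‖ := norm_mul _ _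
      _ ≤ 1 * max M' 0 := by
          apply mul_le_mul hz'.le _ (norm_nonneg _) zero_le_one
          exact le_trans (hM' _ hmem) (le_max_left _ _)
      _ = max M' 0 := one_mul _
  · -- quadratic error bound
    set r : ℝ := (1 + ‖t₀‖) / 2 with hr
    have hrpos : 0 < r := by positivity
    have hr1 : r < 1 := by
      simp only [hr]; linarith
    have ht₀r : ‖t₀‖ < r := by
      simp only [hr]; linarith
    have hsub : Metric.closedBall (0 : ℂ) r ⊆ Metric.ball (0 : ℂ) 1 := by
      intro w hw
      simp only [Metric.mem_closedBall, Metric.mem_ball, Complex.dist_eq, sub_zero] at *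
      exact lt_of_le_of_lt hw hr1
    -- bound for f'' on closedBall 0 r
    have hc2 : ContinuousOn (deriv (deriv f)) (Metric.closedBall (0 : ℂ) r) :=
      (hfd2.differentiableOn.continuousOn).mono hsub
    obtain ⟨K, hK⟩ := (isCompact_closedBall (0 : ℂ) r).exists_bound_of_continuousOn hc2
    set C : ℝ := max K 1 with hC
    have hCpos : 0 < C := lt_of_lt_of_le one_pos (le_max_right _ _)
    set δ : ℝ := (1 - ‖t₀‖) / 2 with hδ
    have hδpos : 0 < δ := by
      simp only [hδ]; linarith
    refine ⟨δ, hδpos, C, hCpos, fun t _ htδ z hz => ?_⟩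
    have hz' : ‖z‖ < 1 := by simpa [Complex.dist_eq] using hz
    -- endpoints in closedBall 0 r
    have hta : t₀ * z ∈ Metric.closedBall (0 : ℂ) r := by
      simp only [Metric.mem_closedBall, Complex.dist_eq, sub_zero, norm_mul]
      exact le_trans (mul_le_of_le_one_right (norm_nonneg _) hz'.le) ht₀r.le
    have htabs : ‖t‖ ≤ r := by
      have := norm_sub_le t t₀
      have h1 : ‖t‖ ≤ ‖t - t₀‖ + ‖t₀‖ := by
        calc ‖t‖ = ‖t - t₀ + t₀‖ := by ring_nf
          _ ≤ ‖t - t₀‖ + ‖t₀‖ := norm_add_le _ _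
      have : ‖t‖ ≤ δ + ‖t₀‖ := le_trans h1 (by linarith)
      simp only [hδ] at this
      simp only [hr]; linarith
    have htb : t * z ∈ Metric.closedBall (0 : ℂ) r := by
      simp only [Metric.mem_closedBall, Complex.dist_eq, sub_zero, norm_mul]
      calc ‖t‖ * ‖z‖ ≤ r * 1 :=
            mul_le_mul htabs hz'.le (norm_nonneg _) hrpos.le
        _ = r := mul_one r
    -- f' is K-Lipschitz on closedBall 0 r
    have hlip : ∀ x ∈ Metric.closedBall (0 : ℂ) r, ∀ y ∈ Metric.closedBall (0 : ℂ) r,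
        ‖deriv f y - deriv f x‖ ≤ K * ‖y - x‖ := by
      intro x hx y hy
      have := Convex.norm_image_sub_le_of_norm_hasDerivWithin_le
        (f := deriv f) (f' := deriv (deriv f)) (s := Metric.closedBall (0 : ℂ) r)
        (fun w hw => ((hfd'.differentiableAt
          (Metric.isOpen_ball.mem_nhds (hsub hw))).hasDerivAt).hasDerivWithinAt)
        (fun w hw => hK w hw) (convex_closedBall _ _) hx hy
      simpa using this
    -- MVT for g(w) = f w - w * deriv f (t₀ * z) on the segment
    set a : ℂ := t₀ * z
    set b : ℂ := t * z
    have hseg : segment ℝ a b ⊆ Metric.closedBall (0 : ℂ) r :=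
      (convex_closedBall _ _).segment_subset hta htb
    have hkey : ‖(f b - b * deriv f a) - (f a - a * deriv f a)‖ ≤
        K * ‖b - a‖ * ‖b - a‖ := by
      have := Convex.norm_image_sub_le_of_norm_hasDerivWithin_le
        (f := fun w => f w - w * deriv f a)
        (f' := fun w => deriv f w - deriv f a) (s := segment ℝ a b)
        (fun w hw => by
          have hw' : w ∈ Metric.ball (0 : ℂ) 1 := hsub (hseg hw)
          have h1 : HasDerivAt f (deriv f w) w :=
            (hf.differentiableAt (Metric.isOpen_ball.mem_nhds hw')).hasDerivAt
          have h2 : HasDerivAt (fun w : ℂ => w * deriv f a) (deriv f a) w := by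
            simpa using (hasDerivAt_id w).mul_const (deriv f a)
          exact (h1.sub h2).hasDerivWithinAt)
        (fun w hw => by
          have hw1 : w ∈ Metric.closedBall (0 : ℂ) r := hseg hw
          have h1 : ‖deriv f w - deriv f a‖ ≤ K * ‖w - a‖ :=
            hlip a hta w hw1
          have h2 : ‖w - a‖ ≤ ‖b - a‖ := by
            obtain ⟨u, v, hu, hv, huv, rfl⟩ := hw
            have : u • a + v • b - a = v • (b - a) := by
              have : u = 1 - v := by linarith
              subst this
              simp [smul_sub, sub_smul, one_smul]
              ring
            rw [this]
            simp only [Complex.real_smul, norm_mul]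
            calc ‖(v : ℂ)‖ * ‖b - a‖
                ≤ 1 * ‖b - a‖ := by
                  apply mul_le_mul_of_nonneg_right _ (norm_nonneg _)
                  have hv1 : v ≤ 1 := by linarith
                  simpa [Complex.norm_real, Real.norm_eq_abs, abs_of_nonneg hv] using hv1
              _ = ‖b - a‖ := one_mul _
          calc ‖deriv f w - deriv f a‖ ≤ K * ‖w - a‖ := h1
            _ ≤ K * ‖b - a‖ := by
                apply mul_le_mul_of_nonneg_left h2
                exact le_trans (norm_nonneg _) (hK a hta)
          )
        (convex_segment _ _) (left_mem_segment ℝ a b) (right_mem_segment ℝ a b)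
      simpa using this
    have hab : ‖b - a‖ ≤ ‖t - t₀‖ := by
      have : b - a = (t - t₀) * z := by simp only [a, b]; ring
      rw [this, norm_mul]
      exact mul_le_of_le_one_right (norm_nonneg _) hz'.le
    have hKnn : 0 ≤ K := le_trans (norm_nonneg _) (hK a hta)
    have hrewrite : f (t * z) - f (t₀ * z) - (t - t₀) * z * deriv f (t₀ * z) =
        (f b - b * deriv f a) - (f a - a * deriv f a) := by
      simp only [a, b]; ring
    rw [hrewrite]
    calc ‖(f b - b * deriv f a) - (f a - a * deriv f a)‖
        ≤ K * ‖b - a‖ * ‖b - a‖ := hkey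
      _ ≤ K * ‖t - t₀‖ * ‖t - t₀‖ := by
          apply mul_le_mul (mul_le_mul_of_nonneg_left hab hKnn) hab
            (norm_nonneg _) (by positivity)
      _ ≤ C * ‖t - t₀‖ ^ 2 := by
          have hKC : K ≤ C := le_max_left K 1
          have h0 : (0:ℝ) ≤ ‖t - t₀‖ := norm_nonneg _
          nlinarith
end

section
/- For every integer n ≥ 1, the supremum M_n = sup_{f∈B₁} |c_n(f)| is attained: there exists f⁰ ∈ B₁ with |c_n(f⁰)| = M_n; moreover M_n ≥ 2/e > 0 and any such maximizer f⁰ is nonconstant. -/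
open Complex Metric Set Filter Topology FormalMultilinearSeries


/-- The class `B₁` of holomorphic maps of `Δ` into the punctured disk `Δ*`. -/
def B1 : Set (ℂ → ℂ) :=
  {f | DifferentiableOn ℂ f (Metric.ball (0 : ℂ) 1) ∧
    ∀ z ∈ Metric.ball (0 : ℂ) 1, f z ≠ 0 ∧ ‖f z‖ < 1}

lemma taylorCoeff_eq_coeff {f : ℂ → ℂ} {p : FormalMultilinearSeries ℂ ℂ ℂ} {r : ENNReal}
    (h : HasFPowerSeriesOnBall f p 0 r) (n : ℕ) : taylorCoeff f n = p.coeff n := by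
  have h1 := h.factorial_smul (1 : ℂ) n
  unfold taylorCoeff
  rw [iteratedDeriv_eq_iteratedFDeriv, ← h1]
  have h2 : (p n fun _ => (1:ℂ)) = p.coeff n := rfl
  rw [h2, nsmul_eq_mul]
  rw [mul_comm, mul_div_assoc]
  simp [Nat.factorial_ne_zero]


lemma b1_hasSeries {f : ℂ → ℂ} (hf : f ∈ B1) {r : NNReal} (h0 : 0 < r) (h1 : (r : ℝ) < 1) :
    HasFPowerSeriesOnBall f (cauchyPowerSeries f 0 r) 0 r :=
  (hf.1.mono (Metric.closedBall_subset_ball h1)).hasFPowerSeriesOnBall h0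

lemma b1_coeff_le_aux {f : ℂ → ℂ} (hf : f ∈ B1) (k : ℕ) {r : NNReal} (h0 : 0 < r)
    (h1 : (r : ℝ) < 1) : ‖taylorCoeff f k‖ ≤ ((r : ℝ)⁻¹) ^ k := by
  have hs := b1_hasSeries hf h0 h1
  rw [taylorCoeff_eq_coeff hs]
  have hb := norm_cauchyPowerSeries_le f 0 r k
  rw [norm_apply_eq_norm_coef] at hb
  refine le_trans hb ?_
  have habs : |(r : ℝ)| = (r : ℝ) := abs_of_nonneg r.coe_nonneg
  have hmem : ∀ θ : ℝ, circleMap 0 r θ ∈ ball (0 : ℂ) 1 := by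
    intro θ
    rw [mem_ball_zero_iff]
    show ‖circleMap 0 r θ‖ < 1
    rw [norm_circleMap_zero, habs]
    exact h1
  have hint : ∀ θ : ℝ, ‖f (circleMap 0 r θ)‖ ≤ 1 := fun θ => le_of_lt (hf.2 _ (hmem θ)).2
  have hcont : Continuous fun θ : ℝ => ‖f (circleMap 0 r θ)‖ := by
    refine Continuous.norm ?_
    exact hf.1.continuousOn.comp_continuous (continuous_circleMap 0 r) hmem
  have hI : (∫ θ : ℝ in (0)..2 * Real.pi, ‖f (circleMap 0 r θ)‖) ≤ 2 * Real.pi := by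
    calc (∫ θ : ℝ in (0)..2 * Real.pi, ‖f (circleMap 0 r θ)‖)
        ≤ ∫ _ : ℝ in (0)..2 * Real.pi, (1 : ℝ) := by
          apply intervalIntegral.integral_mono_on Real.two_pi_pos.le
            (hcont.intervalIntegrable _ _) intervalIntegrable_const
          exact fun θ _ => hint θ
      _ = 2 * Real.pi := by simp
  rw [habs]
  have h2pi : (0 : ℝ) < (2 * Real.pi)⁻¹ := by positivity
  calc (2 * Real.pi)⁻¹ * (∫ θ : ℝ in (0)..2 * Real.pi, ‖f (circleMap 0 r θ)‖) * (r : ℝ)⁻¹ ^ k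
      ≤ (2 * Real.pi)⁻¹ * (2 * Real.pi) * (r : ℝ)⁻¹ ^ k := by
        have := mul_le_mul_of_nonneg_left hI h2pi.le
        exact mul_le_mul_of_nonneg_right this (by positivity)
    _ = (r : ℝ)⁻¹ ^ k := by
        rw [inv_mul_cancel₀ (by positivity : (2 * Real.pi) ≠ 0), one_mul]

lemma b1_coeff_le {f : ℂ → ℂ} (hf : f ∈ B1) (k : ℕ) : ‖taylorCoeff f k‖ ≤ 1 := by
  have hev : ∀ᶠ r : ℝ in nhdsWithin 1 (Set.Iio 1), ‖taylorCoeff f k‖ ≤ r⁻¹ ^ k := by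
    filter_upwards [Ioo_mem_nhdsLT_of_mem (by norm_num : (1:ℝ) ∈ Set.Ioc (1/2) 1)] with r hr
    have hr0 : (0:ℝ) < r := by linarith [hr.1]
    have h0 : 0 < r.toNNReal := Real.toNNReal_pos.2 hr0
    have h1 : (r.toNNReal : ℝ) < 1 := by rw [Real.coe_toNNReal _ hr0.le]; exact hr.2
    have := b1_coeff_le_aux hf k h0 h1
    rwa [Real.coe_toNNReal _ hr0.le] at this
  have hlim : Tendsto (fun r : ℝ => r⁻¹ ^ k) (nhdsWithin 1 (Set.Iio 1)) (nhds 1) := by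
    have h2 : Tendsto (fun r : ℝ => r⁻¹ ^ k) (nhds 1) (nhds 1) := by
      have h3 : Tendsto (fun r : ℝ => r⁻¹) (nhds 1) (nhds 1) := by
        simpa using (tendsto_inv₀ (by norm_num : (1:ℝ) ≠ 0)).comp tendsto_id
      simpa using h3.pow k
    exact h2.mono_left nhdsWithin_le_nhds
  have hne : (nhdsWithin (1:ℝ) (Set.Iio 1)).NeBot := inferInstance
  exact ge_of_tendsto hlim hev

lemma b1_hasSum {f : ℂ → ℂ} (hf : f ∈ B1) {z : ℂ} (hz : z ∈ Metric.ball (0:ℂ) 1) :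
    HasSum (fun k => taylorCoeff f k * z ^ k) (f z) := by
  have hz1 : ‖z‖ < 1 := mem_ball_zero_iff.1 hz
  have hzpos : (0:ℝ) ≤ ‖z‖ := norm_nonneg z
  set rr : ℝ := (‖z‖ + 1) / 2 with hrr
  have hrr0 : 0 < rr := by positivity
  set r : NNReal := rr.toNNReal with hr
  have h0 : 0 < r := Real.toNNReal_pos.2 hrr0
  have hco : (r : ℝ) = rr := Real.coe_toNNReal _ hrr0.le
  have h1 : (r : ℝ) < 1 := by rw [hco]; simp only [hrr]; linarith
  have hs := b1_hasSeries hf h0 h1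
  have hzr : z ∈ Metric.eball (0:ℂ) r := by
    have hlt : ‖z‖₊ < r := by
      rw [← NNReal.coe_lt_coe, hco, coe_nnnorm, hrr]
      linarith
    rw [Metric.mem_eball, edist_zero_right, ← ENNReal.coe_lt_coe] at *
    exact_mod_cast hlt
  have hsum := hs.hasSum hzr
  rw [zero_add] at hsum
  have heq : ∀ k, (cauchyPowerSeries f 0 r k fun _ => z) = taylorCoeff f k * z ^ k := by
    intro k
    rw [FormalMultilinearSeries.apply_eq_pow_smul_coeff, ← taylorCoeff_eq_coeff hs, smul_eq_mul]
    ring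
  simpa only [heq] using hsum

lemma re_moebius_neg {w : ℂ} (hw : ‖w‖ < 1) : ((w - 1)/(w + 1)).re < 0 := by
  have hne : w + 1 ≠ 0 := by
    intro h
    have : w = -1 := by linear_combination h
    rw [this] at hw
    simp at hw
  have hN : 0 < Complex.normSq (w + 1) := Complex.normSq_pos.2 hne
  have key : ((w - 1)/(w + 1)).re = (Complex.normSq w - 1) / Complex.normSq (w + 1) := by
    rw [Complex.div_re]
    simp only [Complex.sub_re, Complex.sub_im, Complex.add_re, Complex.add_im, Complex.one_re,
      Complex.one_im, Complex.normSq_apply]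
    ring
  rw [key]
  apply div_neg_of_neg_of_pos _ hN
  have : Complex.normSq w < 1 := by
    rw [← Complex.sq_norm]
    nlinarith [norm_nonneg w]
  linarith

lemma abs_pow_lt_one {n : ℕ} (hn : 1 ≤ n) {z : ℂ} (hz : z ∈ Metric.ball (0:ℂ) 1) :
    ‖z ^ n‖ < 1 := by
  rw [mem_ball_zero_iff] at hz
  rw [norm_pow]
  exact pow_lt_one₀ (norm_nonneg z) hz (by omega)

lemma denom_ne_zero {w : ℂ} (hw : ‖w‖ < 1) : w + 1 ≠ 0 := by
  intro h
  have : w = -1 := by linear_combination h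
  rw [this] at hw
  simp at hw

lemma witness_mem_B1 (n : ℕ) (hn : 1 ≤ n) :
    (fun z : ℂ => Complex.exp ((z ^ n - 1)/(z ^ n + 1))) ∈ B1 := by
  refine ⟨?_, fun z hz => ⟨Complex.exp_ne_zero _, ?_⟩⟩
  · apply DifferentiableOn.cexp
    apply DifferentiableOn.div
    · exact (differentiable_pow n).differentiableOn.sub_const 1
    · exact (differentiable_pow n).differentiableOn.add_const 1
    · exact fun z hz => denom_ne_zero (abs_pow_lt_one hn hz)
  · rw [Complex.norm_exp]
    exact Real.exp_lt_one_iff.2 (re_moebius_neg (abs_pow_lt_one hn hz))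

lemma witness_taylorCoeff (n : ℕ) (hn : 1 ≤ n) :
    taylorCoeff (fun z : ℂ => Complex.exp ((z ^ n - 1)/(z ^ n + 1))) n = 2 * Complex.exp (-1) := by
  have hn0 : n ≠ 0 := by omega
  set g : ℂ → ℂ := fun w => Complex.exp ((w - 1)/(w + 1)) with hg
  have hga : AnalyticAt ℂ g 0 := by
    apply AnalyticAt.cexp
    exact ((analyticAt_id.sub analyticAt_const).div (analyticAt_id.add analyticAt_const)
      (by norm_num))
  obtain ⟨q, hq⟩ := hga
  -- derivative of g at 0
  have hu : HasDerivAt (fun w : ℂ => (w - 1)/(w + 1)) 2 0 := by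
    have h1 : HasDerivAt (fun w : ℂ => w - 1) 1 0 := (hasDerivAt_id 0).sub_const 1
    have h2 : HasDerivAt (fun w : ℂ => w + 1) 1 0 := (hasDerivAt_id 0).add_const 1
    have := h1.fun_div h2 (by norm_num)
    exact this.congr_deriv (by norm_num)
  have hgd : HasDerivAt g (Complex.exp (-1) * 2) 0 := by
    have := hu.cexp
    exact this.congr_deriv (by norm_num)
  have hq1 : q.coeff 1 = 2 * Complex.exp (-1) := by
    have h := hq.deriv
    rw [hgd.deriv] at h
    show (q 1 fun _ => 1) = _
    rw [← h]; ring
  -- set up the composed series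
  obtain ⟨ρ, hρball⟩ := hq
  obtain ⟨ρ', hρ'pos, hρ'lt⟩ := ENNReal.lt_iff_exists_nnreal_btwn.1 hρball.r_pos
  have hρ'rad : (ρ' : ENNReal) < q.radius := lt_of_lt_of_le hρ'lt hρball.r_le
  obtain ⟨C, hCpos, hC⟩ := q.norm_mul_pow_le_of_lt_radius hρ'rad
  have hρ'pos' : 0 < ρ' := by exact_mod_cast hρ'pos
  set s : NNReal := min ρ' 1 with hs
  have hspos : 0 < s := lt_min hρ'pos' one_pos
  have hsle1 : s ≤ 1 := min_le_right _ _
  have hsnρ : s ^ n ≤ ρ' := le_trans (le_trans (pow_le_pow_of_le_one (zero_le : 0 ≤ s) hsle1 hn)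
    (by rw [pow_one])) (min_le_left _ _)
  set c : ℕ → ℂ := fun k => if n ∣ k then q.coeff (k / n) else 0 with hc
  set p' : FormalMultilinearSeries ℂ ℂ ℂ := FormalMultilinearSeries.ofScalars ℂ c with hp'
  have hp'coeff : ∀ k, p'.coeff k = c k := by
    intro k
    show p' k (fun _ => (1:ℂ)) = c k
    rw [hp', FormalMultilinearSeries.ofScalars_apply_eq]
    simp
  have hp'rad : (s : ENNReal) ≤ p'.radius := by
    apply FormalMultilinearSeries.le_radius_of_bound _ C
    intro k
    by_cases hdvd : n ∣ k
    · obtain ⟨m, rfl⟩ := hdvd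
      have hnorm : ‖p' (n * m)‖ = ‖q.coeff m‖ := by
        rw [hp', FormalMultilinearSeries.ofScalars_norm, hc]
        simp [Nat.mul_div_cancel_left m (by omega : 0 < n)]
      rw [hnorm]
      calc ‖q.coeff m‖ * (s : ℝ) ^ (n * m)
          = ‖q.coeff m‖ * ((s : ℝ) ^ n) ^ m := by rw [← pow_mul]
        _ ≤ ‖q m‖ * (ρ' : ℝ) ^ m := by
            rw [FormalMultilinearSeries.norm_apply_eq_norm_coef]
            apply mul_le_mul_of_nonneg_left _ (norm_nonneg _)
            apply pow_le_pow_left₀ (by positivity)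
            exact_mod_cast hsnρ
        _ ≤ C := hC m
    · have : p' k = 0 := FormalMultilinearSeries.ofScalars_eq_zero_of_scalar_zero
        (E := ℂ) (by simp [hc, hdvd])
      rw [this]
      simp [hCpos.le]
  have hball : HasFPowerSeriesOnBall (fun z : ℂ => Complex.exp ((z ^ n - 1)/(z ^ n + 1))) p' 0 s := by
    constructor
    · exact hp'rad
    · exact_mod_cast hspos
    · intro y hy
      have hys : ‖y‖₊ < s := by
        rw [Metric.mem_eball, edist_zero_right] at hy
        exact_mod_cast hy
      have hyn : y ^ n ∈ Metric.eball (0 : ℂ) ρ := by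
        rw [Metric.mem_eball, edist_zero_right]
        have h1 : ‖y ^ n‖₊ = ‖y‖₊ ^ n := by simp
        have h2 : ‖y‖₊ ^ n < ρ' := by
          calc ‖y‖₊ ^ n < s ^ n := pow_lt_pow_left₀ hys (zero_le : 0 ≤ ‖y‖₊) hn0
            _ ≤ ρ' := hsnρ
        calc (‖y ^ n‖₊ : ENNReal) = ((‖y‖₊ ^ n : NNReal) : ENNReal) := by rw [nnnorm_pow]
          _ < (ρ' : ENNReal) := by exact_mod_cast h2
          _ < ρ := hρ'lt
      have hsum := hρball.hasSum hyn
      rw [zero_add] at hsum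
      have hsum' : HasSum (fun m => q.coeff m * y ^ (n * m)) (g (y ^ n)) := by
        have heq : ∀ m, (q m fun _ => y ^ n) = q.coeff m * y ^ (n * m) := by
          intro m
          rw [FormalMultilinearSeries.apply_eq_pow_smul_coeff, smul_eq_mul, ← pow_mul]
          ring
        simpa only [heq] using hsum
      rw [zero_add]
      have hinj : Function.Injective (fun m : ℕ => n * m) :=
        fun a b h => by dsimp at h; exact Nat.eq_of_mul_eq_mul_left (by omega) h
      have hoff : ∀ k, k ∉ Set.range (fun m : ℕ => n * m) → (p' k fun _ => y) = 0 := by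
        intro k hk
        have hdvd : ¬ n ∣ k := by
          intro hd
          obtain ⟨m, rfl⟩ := hd
          exact hk ⟨m, rfl⟩
        rw [hp', FormalMultilinearSeries.ofScalars_apply_eq, hc]
        simp [hdvd]
      rw [← Function.Injective.hasSum_iff hinj hoff]
      have heq2 : ∀ m, ((fun k => p' k fun _ => y) ∘ (fun m : ℕ => n * m)) m
          = q.coeff m * y ^ (n * m) := by
        intro m
        have hd : n ∣ n * m := ⟨m, rfl⟩
        simp only [Function.comp_apply]
        rw [hp', FormalMultilinearSeries.ofScalars_apply_eq, hc]
        simp [hd, Nat.mul_div_cancel_left m (by omega : 0 < n), smul_eq_mul]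
      have hfun : ((fun k => p' k fun _ => y) ∘ fun m : ℕ => n * m)
          = fun m => q.coeff m * y ^ (n * m) := funext heq2
      rw [hfun]
      exact hsum'
  have := taylorCoeff_eq_coeff hball n
  rw [this, hp'coeff, hc]
  simp [Nat.div_self (by omega : 0 < n), hq1]

lemma const_coeff_zero {f : ℂ → ℂ} {a : ℂ} (h : ∀ z ∈ Metric.ball (0:ℂ) 1, f z = a)
    {n : ℕ} (hn : 1 ≤ n) : taylorCoeff f n = 0 := by
  have hev : f =ᶠ[nhds (0:ℂ)] (fun _ => a) :=
    Filter.eventuallyEq_of_mem (Metric.ball_mem_nhds 0 one_pos) h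
  have h1 : iteratedDeriv n f 0 = iteratedDeriv n (fun _ : ℂ => a) 0 :=
    Filter.EventuallyEq.iteratedDeriv_eq n hev
  have h2 : iteratedDeriv n (fun _ : ℂ => a) 0 = 0 := by
    obtain ⟨m, rfl⟩ : ∃ m, n = m + 1 := ⟨n - 1, by omega⟩
    rw [iteratedDeriv_succ']
    have hd : (deriv fun _ : ℂ => a) = fun _ : ℂ => (0:ℂ) := by
      funext x; exact deriv_const x a
    rw [hd]
    clear h1 hev h hn
    induction m with
    | zero => simp [iteratedDeriv_zero]
    | succ k ih =>
        rw [iteratedDeriv_succ']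
        have : (deriv fun _ : ℂ => (0:ℂ)) = fun _ : ℂ => (0:ℂ) := by
          funext x; exact deriv_const x 0
        rw [this]
        exact ih
  unfold taylorCoeff
  rw [h1, h2, zero_div]

lemma diff_sum_bound {d : ℕ → ℂ} (hd : ∀ k, ‖d k‖ ≤ 2) {r : ℝ} (hr0 : 0 ≤ r)
    (hr1 : r < 1) {z : ℂ} (hz : ‖z‖ ≤ r) {V : ℂ}
    (hV : HasSum (fun k => d k * z ^ k) V) :
    ‖V‖ ≤ ∑' k, ‖d k‖ * r ^ k := by
  have hsummable : Summable (fun k => ‖d k‖ * r ^ k) := by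
    apply Summable.of_nonneg_of_le (fun k => by positivity)
      (fun k => ?_) ((summable_geometric_of_lt_one hr0 hr1).mul_left 2)
    exact mul_le_mul_of_nonneg_right (hd k) (by positivity)
  rw [← hV.tsum_eq]
  have hsum2 : Summable (fun k => ‖d k * z ^ k‖) := by
    apply Summable.of_nonneg_of_le (fun k => norm_nonneg _) (fun k => ?_) hsummable
    rw [norm_mul, norm_pow]
    exact mul_le_mul_of_nonneg_left (pow_le_pow_left₀ (norm_nonneg z) hz k) (norm_nonneg _)
  refine le_trans (norm_tsum_le_tsum_norm hsum2) (Summable.tsum_le_tsum (fun k => ?_) hsum2 hsummable)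
  rw [norm_mul, norm_pow]
  exact mul_le_mul_of_nonneg_left (pow_le_pow_left₀ (norm_nonneg z) hz k) (norm_nonneg _)

lemma error_tendsto {d : ℕ → ℕ → ℂ} (hd2 : ∀ j k, ‖d j k‖ ≤ 2)
    (hd0 : ∀ k, Tendsto (fun j => d j k) atTop (nhds 0)) {r : ℝ} (hr0 : 0 ≤ r) (hr1 : r < 1) :
    Tendsto (fun j => ∑' k, ‖d j k‖ * r ^ k) atTop (nhds 0) := by
  have h := tendsto_tsum_of_dominated_convergence
    (𝓕 := atTop) (f := fun j k => ‖d j k‖ * r ^ k) (g := fun _ => (0:ℝ))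
    (bound := fun k => 2 * r ^ k)
    ((summable_geometric_of_lt_one hr0 hr1).mul_left 2) ?_ ?_
  · simpa using h
  · intro k
    have h1 : Tendsto (fun j => ‖d j k‖) atTop (nhds 0) := by
      have := (continuous_norm.tendsto 0).comp (hd0 k)
      rwa [norm_zero] at this
    simpa using h1.mul_const (r ^ k)
  · filter_upwards with j
    intro k
    have hnn : (0:ℝ) ≤ ‖d j k‖ * r ^ k := by positivity
    rw [Real.norm_eq_abs, _root_.abs_of_nonneg hnn]
    exact mul_le_mul_of_nonneg_right (hd2 j k) (by positivity)

/-- For each `n ≥ 1`, the supremum `M_n = sup_{f ∈ B₁} |c_n(f)|` is attained,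
`M_n ≥ 2/e > 0`, and any maximizer is nonconstant on `Δ`. -/
theorem sup_coeff_attained (n : ℕ) (hn : 1 ≤ n) :
    (∃ f0 ∈ B1, ‖taylorCoeff f0 n‖ =
      sSup {x : ℝ | ∃ f ∈ B1, x = ‖taylorCoeff f n‖}) ∧
    (2 / Real.exp 1 ≤
      sSup {x : ℝ | ∃ f ∈ B1, x = ‖taylorCoeff f n‖}) ∧
    (0 < 2 / Real.exp 1) ∧
    (∀ f0 ∈ B1, ‖taylorCoeff f0 n‖ =
        sSup {x : ℝ | ∃ f ∈ B1, x = ‖taylorCoeff f n‖} →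
      ¬ ∃ a : ℂ, ∀ z ∈ Metric.ball (0 : ℂ) 1, f0 z = a) := by
  set S := {x : ℝ | ∃ f ∈ B1, x = ‖taylorCoeff f n‖} with hS
  set W : ℂ → ℂ := fun z => Complex.exp ((z ^ n - 1)/(z ^ n + 1)) with hW
  have habsW : ‖taylorCoeff W n‖ = 2 / Real.exp 1 := by
    rw [hW, witness_taylorCoeff n hn, norm_mul, Complex.norm_two, Complex.norm_exp]
    norm_num [Real.exp_neg]
    rw [div_eq_mul_inv]
  have hWmem : W ∈ B1 := witness_mem_B1 n hn
  have hSne : S.Nonempty := ⟨‖taylorCoeff W n‖, W, hWmem, rfl⟩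
  have hSbdd : BddAbove S := by
    refine ⟨1, fun x hx => ?_⟩
    obtain ⟨f, hf, rfl⟩ := hx
    exact b1_coeff_le hf n
  have hepos : 0 < 2 / Real.exp 1 := by positivity
  have hM2e : 2 / Real.exp 1 ≤ sSup S := le_csSup hSbdd ⟨W, hWmem, habsW.symm⟩
  have hMpos : 0 < sSup S := lt_of_lt_of_le hepos hM2e
  have hnonconst : ∀ f0 ∈ B1, ‖taylorCoeff f0 n‖ = sSup S →
      ¬ ∃ a : ℂ, ∀ z ∈ Metric.ball (0 : ℂ) 1, f0 z = a := by
    rintro f0 _ heq ⟨a, ha⟩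
    rw [const_coeff_zero ha hn] at heq
    simp only [norm_zero] at heq
    rw [← heq] at hMpos
    exact lt_irrefl _ hMpos
  refine ⟨?_, hM2e, hepos, hnonconst⟩
  -- existence of a maximizer
  obtain ⟨u, hu_mono, hu_tendsto, hu_mem⟩ := exists_seq_tendsto_sSup hSne hSbdd
  choose F hF hFeq using hu_mem
  have hT : IsCompact (Set.pi Set.univ (fun _ : ℕ => Metric.closedBall (0:ℂ) 1)) :=
    isCompact_univ_pi fun _ => isCompact_closedBall 0 1
  have haT : ∀ j, (fun k => taylorCoeff (F j) k) ∈
      Set.pi Set.univ (fun _ : ℕ => Metric.closedBall (0:ℂ) 1) := by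
    intro j k _
    rw [Metric.mem_closedBall, dist_zero_right]
    exact b1_coeff_le (hF j) k
  obtain ⟨c, hcT, φ, hφ, hconv⟩ := hT.tendsto_subseq haT
  rw [tendsto_pi_nhds] at hconv
  have hck : ∀ k, Tendsto (fun j => taylorCoeff (F (φ j)) k) atTop (nhds (c k)) :=
    fun k => hconv k
  have hcle : ∀ k, ‖c k‖ ≤ 1 := by
    intro k
    have h1 := hcT k (Set.mem_univ k)
    rwa [Metric.mem_closedBall, dist_zero_right] at h1
  set p : FormalMultilinearSeries ℂ ℂ ℂ := FormalMultilinearSeries.ofScalars ℂ c with hp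
  have hpnorm : ∀ k, ‖p k‖ = ‖c k‖ := by
    intro k
    rw [hp]
    exact FormalMultilinearSeries.ofScalars_norm ℂ c k
  have hrad : 1 ≤ p.radius := by
    apply FormalMultilinearSeries.le_radius_of_bound _ 1
    intro k
    rw [hpnorm k]
    push_cast
    rw [one_pow, mul_one]
    exact hcle k
  set f0 : ℂ → ℂ := fun z => p.sum z with hf0
  have hball1 : HasFPowerSeriesOnBall f0 p 0 1 := by
    have h1 := p.hasFPowerSeriesOnBall (lt_of_lt_of_le zero_lt_one hrad)
    exact h1.mono zero_lt_one hrad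
  have hf0coeff : ∀ k, taylorCoeff f0 k = c k := by
    intro k
    rw [taylorCoeff_eq_coeff hball1]
    show p k (fun _ => 1) = c k
    rw [hp, FormalMultilinearSeries.ofScalars_apply_eq]
    simp
  have hball_eq : Metric.eball (0:ℂ) 1 = Metric.ball (0:ℂ) 1 := by
    rw [show ((1:ENNReal)) = ((1:NNReal) : ENNReal) by norm_num, Metric.emetric_ball_nnreal]
    norm_num
  have hf0diff : DifferentiableOn ℂ f0 (Metric.ball (0:ℂ) 1) := by
    have h1 := hball1.differentiableOn
    rwa [hball_eq] at h1
  set d : ℕ → ℕ → ℂ := fun j k => taylorCoeff (F (φ j)) k - c k with hd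
  have hd2 : ∀ j k, ‖d j k‖ ≤ 2 := by
    intro j k
    show ‖taylorCoeff (F (φ j)) k - c k‖ ≤ 2
    refine le_trans (norm_sub_le _ _) ?_
    have h1 : ‖taylorCoeff (F (φ j)) k‖ ≤ 1 := b1_coeff_le (hF (φ j)) k
    have h2 : ‖c k‖ ≤ 1 := hcle k
    linarith
  have hd0 : ∀ k, Tendsto (fun j => d j k) atTop (nhds 0) := by
    intro k
    have h1 := (hck k).sub_const (c k)
    simpa [hd] using h1
  have hErr : ∀ r : ℝ, 0 ≤ r → r < 1 →
      (Tendsto (fun j => ∑' k, ‖d j k‖ * r ^ k) atTop (nhds 0)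
       ∧ ∀ j z, ‖z‖ ≤ r →
          ‖F (φ j) z - f0 z‖ ≤ ∑' k, ‖d j k‖ * r ^ k) := by
    intro r hr0 hr1
    refine ⟨error_tendsto hd2 hd0 hr0 hr1, fun j z hz => ?_⟩
    have hzball : z ∈ Metric.ball (0:ℂ) 1 := by
      rw [mem_ball_zero_iff]
      exact lt_of_le_of_lt hz hr1
    have h1 : HasSum (fun k => taylorCoeff (F (φ j)) k * z ^ k) (F (φ j) z) :=
      b1_hasSum (hF (φ j)) hzball
    have h2 : HasSum (fun k => c k * z ^ k) (f0 z) := by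
      have hz1 : z ∈ Metric.eball (0:ℂ) 1 := by rw [hball_eq]; exact hzball
      have h3 := hball1.hasSum hz1
      rw [zero_add] at h3
      have heq : ∀ k, (p k fun _ => z) = c k * z ^ k := by
        intro k
        rw [hp, FormalMultilinearSeries.ofScalars_apply_eq, smul_eq_mul]
      simpa only [heq] using h3
    have h3 : HasSum (fun k => d j k * z ^ k) (F (φ j) z - f0 z) := by
      have h4 := h1.sub h2
      have heq : ∀ k, taylorCoeff (F (φ j)) k * z ^ k - c k * z ^ k = d j k * z ^ k := by
        intro k; rw [hd]; ring
      simpa only [heq] using h4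
    exact diff_sum_bound (hd2 j) hr0 hr1 hz h3
  have hpt : ∀ z ∈ Metric.ball (0:ℂ) 1, Tendsto (fun j => F (φ j) z) atTop (nhds (f0 z)) := by
    intro z hz
    have hz1 : ‖z‖ < 1 := mem_ball_zero_iff.1 hz
    have hznn : 0 ≤ ‖z‖ := norm_nonneg z
    obtain ⟨hE, hB⟩ := hErr ((‖z‖ + 1)/2) (by positivity) (by linarith)
    rw [tendsto_iff_dist_tendsto_zero]
    apply squeeze_zero (fun j => dist_nonneg) (fun j => ?_) hE
    rw [dist_eq_norm]
    exact hB j z (by linarith)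
  have habs_cn : ‖c n‖ = sSup S := by
    have h1 : Tendsto (fun j => ‖taylorCoeff (F (φ j)) n‖) atTop
        (nhds (‖c n‖)) := (continuous_norm.tendsto (c n)).comp (hck n)
    have h2 : Tendsto (fun j => ‖taylorCoeff (F (φ j)) n‖) atTop (nhds (sSup S)) := by
      have h3 := hu_tendsto.comp hφ.tendsto_atTop
      have h4 : (fun j => ‖taylorCoeff (F (φ j)) n‖) = u ∘ φ := by
        funext j; rw [Function.comp_apply, hFeq (φ j)]
      rw [h4]; exact h3
    exact tendsto_nhds_unique h1 h2
  have hcn_ne : c n ≠ 0 := by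
    intro h
    rw [h, norm_zero] at habs_cn
    rw [← habs_cn] at hMpos
    exact lt_irrefl _ hMpos
  have hnc : ¬ ∃ a : ℂ, ∀ z ∈ Metric.ball (0:ℂ) 1, f0 z = a := by
    rintro ⟨a, ha⟩
    have h1 := const_coeff_zero ha hn
    rw [hf0coeff n] at h1
    exact hcn_ne h1
  have hle : ∀ z ∈ Metric.ball (0:ℂ) 1, ‖f0 z‖ ≤ 1 := by
    intro z hz
    apply le_of_tendsto ((continuous_norm.tendsto _).comp (hpt z hz))
    filter_upwards with j using le_of_lt ((hF (φ j)).2 z hz).2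
  have hlt : ∀ z ∈ Metric.ball (0:ℂ) 1, ‖f0 z‖ < 1 := by
    intro z hz
    rcases lt_or_eq_of_le (hle z hz) with h | h
    · exact h
    · exfalso
      have hmax : IsMaxOn (norm ∘ f0) (Metric.ball (0:ℂ) 1) z := by
        intro w hw
        show ‖f0 w‖ ≤ ‖f0 z‖
        have h1 : ‖f0 w‖ ≤ 1 := hle w hw
        show ‖f0 w‖ ≤ ‖f0 z‖
        rw [← h] at h1
        exact h1
      have heqon := Complex.eqOn_of_isPreconnected_of_isMaxOn_norm
        (convex_ball (0:ℂ) 1).isPreconnected Metric.isOpen_ball hf0diff hz hmax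
      exact hnc ⟨f0 z, fun w hw => heqon hw⟩
  have hne0 : ∀ z ∈ Metric.ball (0:ℂ) 1, f0 z ≠ 0 := by
    intro z0 hz0 hval
    have hanal : AnalyticAt ℂ f0 z0 := hf0diff.analyticAt (Metric.isOpen_ball.mem_nhds hz0)
    rcases hanal.eventually_eq_zero_or_eventually_ne_zero with hzero | hnz
    · have hAOn : AnalyticOnNhd ℂ f0 (Metric.ball (0:ℂ) 1) :=
        hf0diff.analyticOnNhd Metric.isOpen_ball
      have h0 : Set.EqOn f0 0 (Metric.ball (0:ℂ) 1) :=
        hAOn.eqOn_zero_of_preconnected_of_eventuallyEq_zero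
          (convex_ball (0:ℂ) 1).isPreconnected hz0 hzero
      exact hnc ⟨0, fun w hw => h0 hw⟩
    · have hz01 : ‖z0‖ < 1 := mem_ball_zero_iff.1 hz0
      have hz0nn : 0 ≤ ‖z0‖ := norm_nonneg z0
      rw [eventually_nhdsWithin_iff] at hnz
      rw [Metric.eventually_nhds_iff] at hnz
      obtain ⟨ε, hε, hεprop⟩ := hnz
      set ρ : ℝ := min (ε/2) ((1 - ‖z0‖)/2) with hρ
      have hρ0 : 0 < ρ := lt_min (by positivity) (by linarith)
      have hρε : ρ < ε := lt_of_le_of_lt (min_le_left _ _) (by linarith)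
      have hρ1 : ρ ≤ (1 - ‖z0‖)/2 := min_le_right _ _
      have hsub : Metric.closedBall z0 ρ ⊆ Metric.ball (0:ℂ) 1 := by
        intro w hw
        rw [Metric.mem_closedBall] at hw
        rw [Metric.mem_ball]
        calc dist w 0 ≤ dist w z0 + dist z0 0 := dist_triangle w z0 0
          _ ≤ ρ + dist z0 0 := add_le_add_left hw _
          _ = ρ + ‖z0‖ := by rw [dist_zero_right]
          _ < 1 := by linarith
      have hsphere_ne : ∀ w ∈ Metric.sphere z0 ρ, f0 w ≠ 0 := by
        intro w hw
        rw [mem_sphere_iff_norm] at hw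
        apply hεprop
        · rw [dist_eq_norm, hw]; exact hρε
        · simp only [Set.mem_compl_iff, Set.mem_singleton_iff]
          intro hww
          rw [hww] at hw
          simp at hw
          linarith
      have hsne : (Metric.sphere z0 ρ).Nonempty := NormedSpace.sphere_nonempty.mpr hρ0.le
      have hcont : ContinuousOn (fun w => ‖f0 w‖) (Metric.sphere z0 ρ) := by
        apply ContinuousOn.norm
        exact hf0diff.continuousOn.mono (fun w hw => hsub (Metric.sphere_subset_closedBall hw))
      obtain ⟨w0, hw0mem, hw0min⟩ := (isCompact_sphere z0 ρ).exists_isMinOn hsne hcont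
      set m : ℝ := ‖f0 w0‖ with hm
      have hmpos : 0 < m := by
        rw [hm, norm_pos_iff]
        exact hsphere_ne w0 hw0mem
      set r : ℝ := (‖z0‖ + ρ + 1)/2 with hr
      have hρsmall : ‖z0‖ + ρ < 1 := by linarith
      have hr0 : 0 ≤ r := by rw [hr]; positivity
      have hr1 : r < 1 := by rw [hr]; linarith
      have hsphere_r : ∀ w ∈ Metric.sphere z0 ρ, ‖w‖ ≤ r := by
        intro w hw
        rw [mem_sphere_iff_norm] at hw
        calc ‖w‖ = ‖w‖ := rfl
          _ ≤ ‖z0‖ + ‖w - z0‖ := norm_le_norm_add_norm_sub' w z0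
          _ = ‖z0‖ + ρ := by rw [hw]
          _ ≤ r := by rw [hr]; linarith
      obtain ⟨hE, hB⟩ := hErr r hr0 hr1
      have hev : ∀ᶠ j in atTop, ∑' k, ‖d j k‖ * r ^ k < m/2 :=
        hE.eventually_lt_const (by positivity)
      obtain ⟨j, hj⟩ := hev.exists
      have hjsphere : ∀ w ∈ Metric.sphere z0 ρ, m/2 ≤ ‖F (φ j) w‖ := by
        intro w hw
        have h1 : ‖F (φ j) w - f0 w‖ < m/2 :=
          lt_of_le_of_lt (hB j w (hsphere_r w hw)) hj
        have h2 : m ≤ ‖f0 w‖ := hw0min hw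
        have h3 : ‖f0 w‖ ≤ ‖F (φ j) w‖ + ‖F (φ j) w - f0 w‖ := by
          calc ‖f0 w‖ = ‖F (φ j) w - (F (φ j) w - f0 w)‖ := by ring_nf
            _ ≤ ‖F (φ j) w‖ + ‖F (φ j) w - f0 w‖ := norm_sub_le _ _
        linarith
      have hinv_diff : DifferentiableOn ℂ (fun w => (F (φ j) w)⁻¹) (closure (Metric.ball z0 ρ)) := by
        rw [closure_ball z0 hρ0.ne']
        exact DifferentiableOn.inv ((hF (φ j)).1.mono hsub)
          (fun w hw => ((hF (φ j)).2 w (hsub hw)).1)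
      have hfrontier : frontier (Metric.ball z0 ρ) = Metric.sphere z0 ρ :=
        frontier_ball z0 hρ0.ne'
      have hmaxp : ‖(F (φ j) z0)⁻¹‖ ≤ (m/2)⁻¹ := by
        apply Complex.norm_le_of_forall_mem_frontier_norm_le Metric.isBounded_ball
          hinv_diff.diffContOnCl
        · intro w hw
          rw [hfrontier] at hw
          rw [norm_inv]
          apply inv_anti₀ (by positivity) (hjsphere w hw)
        · exact subset_closure (Metric.mem_ball_self hρ0)
      have hfj_ne : F (φ j) z0 ≠ 0 := ((hF (φ j)).2 z0 hz0).1
      have hge : m/2 ≤ ‖F (φ j) z0‖ := by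
        rw [norm_inv] at hmaxp
        have hpos : 0 < ‖F (φ j) z0‖ := norm_pos_iff.2 hfj_ne
        rw [inv_le_inv₀ hpos (by positivity)] at hmaxp
        exact hmaxp
      have hlt2 : ‖F (φ j) z0‖ < m/2 := by
        have h1 : ‖F (φ j) z0 - f0 z0‖ < m/2 :=
          lt_of_le_of_lt (hB j z0 (by rw [hr]; show ‖z0‖ ≤ _; linarith)) hj
        rw [hval, sub_zero] at h1
        exact h1
      linarith
  exact ⟨f0, ⟨hf0diff, fun z hz => ⟨hne0 z hz, hlt z hz⟩⟩, by rw [hf0coeff n]; exact habs_cn⟩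
end

section
/- If n ≥ 1 and f⁰ ∈ B₁ maximizes |c_n| over B₁, i.e., |c_n(f⁰)| = sup_{f∈B₁}|c_n(f)|, then sup_{z∈Δ} |f⁰(z)| = 1. -/
open Metric Real

private lemma iterDeriv_zero_fn (m : ℕ) :
    iteratedDeriv m (fun _ : ℂ => (0 : ℂ)) = fun _ => 0 := by
  induction m with
  | zero => simp [iteratedDeriv_zero]
  | succ m ih => rw [iteratedDeriv_succ, ih]; funext x; simp

private lemma iterDerivWithin_open_eq {s : Set ℂ} (hs : IsOpen s) {x : ℂ} (hx : x ∈ s)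
    (f : ℂ → ℂ) (n : ℕ) : iteratedDerivWithin n f s x = iteratedDeriv n f x := by
  rw [iteratedDerivWithin, iteratedDeriv, iteratedFDerivWithin_of_isOpen n hs hx]

/-- Invariance of the `n`-th derivative at `0` under multiplication by a constant,
for a function only differentiable on the unit ball. -/
private lemma iterDeriv_const_mul_ball (c : ℂ) {f : ℂ → ℂ}
    (hf : DifferentiableOn ℂ f (ball (0 : ℂ) 1)) (n : ℕ) :
    iteratedDeriv n (fun z => c * f z) 0 = c * iteratedDeriv n f 0 := by
  have h0 : (0 : ℂ) ∈ ball (0 : ℂ) 1 := by simp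
  have hcd : ContDiffOn ℂ n f (ball (0 : ℂ) 1) :=
    (hf.analyticOnNhd isOpen_ball).contDiffOn isOpen_ball.uniqueDiffOn
  rw [← iterDerivWithin_open_eq isOpen_ball h0, ← iterDerivWithin_open_eq isOpen_ball h0,
    iteratedDerivWithin_const_mul h0 isOpen_ball.uniqueDiffOn c (hcd 0 h0)]

private lemma iter_pow (n : ℕ) : ∀ k ≤ n, iteratedDeriv k (fun z : ℂ => z ^ n) =
    fun z => (n.descFactorial k : ℂ) * z ^ (n - k) := by
  intro k hk
  induction k with
  | zero => simp
  | succ k ih =>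
    rw [iteratedDeriv_succ, ih (Nat.le_of_succ_le hk)]
    funext z
    rw [deriv_const_mul _ (differentiable_pow (n - k)).differentiableAt, deriv_pow_field]
    have h1 : n - (k + 1) = n - k - 1 := by omega
    rw [Nat.descFactorial_succ, h1]
    push_cast
    ring

private lemma coeff_bound {f : ℂ → ℂ} (hf : f ∈ B1) (n : ℕ) :
    ‖taylorCoeff f n‖ ≤ 2 ^ n := by
  have hhalf : ((1/2 : NNReal) : ℝ) = 1/2 := by norm_num
  have hd : DifferentiableOn ℂ f (closedBall (0 : ℂ) ((1/2 : NNReal) : ℝ)) :=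
    hf.1.mono (closedBall_subset_ball (by rw [hhalf]; norm_num))
  have hps := hd.hasFPowerSeriesOnBall (R := 1/2) (by norm_num)
  set p := cauchyPowerSeries f 0 ((1/2 : NNReal) : ℝ) with hp
  have h1 : iteratedDeriv n f 0 = n.factorial • p n (fun _ => 1) := by
    rw [iteratedDeriv_eq_iteratedFDeriv, ← hps.factorial_smul (1 : ℂ) n]
  have h2 : ‖p n fun _ => 1‖ ≤ ‖p n‖ := by
    calc ‖p n fun _ => 1‖ ≤ ‖p n‖ * ∏ _i : Fin n, ‖(1 : ℂ)‖ := (p n).le_opNorm _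
    _ = ‖p n‖ := by simp
  have h3 := norm_cauchyPowerSeries_le f 0 ((1/2 : NNReal) : ℝ) n
  rw [hhalf] at h3
  have hmem : ∀ θ : ℝ, circleMap 0 ((1/2 : NNReal) : ℝ) θ ∈ ball (0 : ℂ) 1 := by
    intro θ
    simp only [mem_ball, Complex.dist_eq, sub_zero]
    rw [show ‖circleMap 0 ((1/2 : NNReal) : ℝ) θ‖ = |((1/2 : NNReal) : ℝ)| from
      norm_circleMap_zero _ _, hhalf, abs_of_pos (by norm_num : (0:ℝ) < 1/2)]
    norm_num
  have hcont : Continuous fun θ : ℝ => ‖f (circleMap 0 ((1/2 : NNReal) : ℝ) θ)‖ := by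
    apply Continuous.norm
    exact ContinuousOn.comp_continuous (hf.1.continuousOn) (continuous_circleMap 0 _) hmem
  have h4 : (∫ θ in (0 : ℝ)..2 * π, ‖f (circleMap 0 ((1/2 : NNReal) : ℝ) θ)‖) ≤
      ∫ _θ in (0 : ℝ)..2 * π, (1 : ℝ) := by
    apply intervalIntegral.integral_mono_on (by positivity)
      (hcont.intervalIntegrable _ _) intervalIntegrable_const
    intro θ _
    exact ((hf.2 _ (hmem θ)).2).le
  have hπ : (0 : ℝ) < 2 * π := by positivity
  have hint : (2 * π)⁻¹ * (∫ θ in (0 : ℝ)..2 * π, ‖f (circleMap 0 ((1/2 : NNReal) : ℝ) θ)‖)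
      ≤ 1 := by
    rw [inv_mul_le_iff₀ hπ, mul_one]
    refine h4.trans ?_
    simp
  have habs : |(1/2 : ℝ)|⁻¹ ^ n = 2 ^ n := by
    rw [abs_of_pos (by norm_num : (0:ℝ) < 1/2)]
    norm_num
  have h5 : ‖p n‖ ≤ 2 ^ n := by
    refine h3.trans ?_
    rw [habs]
    have hnn : (0 : ℝ) ≤ (2 : ℝ) ^ n := by positivity
    calc ((2 * π)⁻¹ * ∫ θ in (0 : ℝ)..2 * π, ‖f (circleMap 0 ((1/2 : NNReal) : ℝ) θ)‖) * 2 ^ n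
        ≤ 1 * 2 ^ n := mul_le_mul_of_nonneg_right hint hnn
      _ = 2 ^ n := one_mul _
  have hfac : (0 : ℝ) < (n.factorial : ℝ) := by exact_mod_cast n.factorial_pos
  have heq : ‖taylorCoeff f n‖ = ‖p n fun _ => 1‖ := by
    rw [taylorCoeff, norm_div, h1]
    simp only [nsmul_eq_mul, norm_mul, Complex.norm_natCast]
    rw [mul_comm, mul_div_assoc, div_self (ne_of_gt hfac), mul_one]
  rw [heq]
  exact h2.trans h5

private lemma witness_mem (n : ℕ) : (fun z : ℂ => 1/2 + (1/4) * z ^ n) ∈ B1 := by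
  refine ⟨(Differentiable.differentiableOn (by fun_prop)), fun z hz => ?_⟩
  have hzn : ‖(1/4 : ℂ) * z ^ n‖ ≤ 1/4 := by
    rw [norm_mul, norm_pow]
    have h1 : ‖z‖ ≤ 1 := by
      simpa [Complex.dist_eq] using (mem_ball.mp hz).le
    have : ‖z‖ ^ n ≤ 1 := pow_le_one₀ (norm_nonneg z) h1
    calc ‖(1/4 : ℂ)‖ * ‖z‖ ^ n ≤ ‖(1/4 : ℂ)‖ * 1 :=
          mul_le_mul_of_nonneg_left this (norm_nonneg _)
      _ = 1/4 := by norm_num [Complex.norm_ofNat]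
  constructor
  · intro h
    have : (1/4 : ℂ) * z ^ n = -(1/2) := by linear_combination h
    rw [this] at hzn
    norm_num at hzn
  · calc ‖1/2 + (1/4 : ℂ) * z ^ n‖
        ≤ ‖(1/2 : ℂ)‖ + ‖(1/4 : ℂ) * z ^ n‖ := norm_add_le _ _
      _ ≤ 1/2 + 1/4 := by
          refine add_le_add (le_of_eq ?_) hzn
          norm_num
      _ < 1 := by norm_num

private lemma witness_coeff (n : ℕ) (hn : 1 ≤ n) :
    ‖taylorCoeff (fun z : ℂ => 1/2 + (1/4) * z ^ n) n‖ = 1/4 := by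
  obtain ⟨m, rfl⟩ : ∃ m, n = m + 1 := ⟨n - 1, by omega⟩
  have hderiv : deriv (fun z : ℂ => 1/2 + (1/4) * z ^ (m + 1)) =
      fun z => ((1/4 : ℂ) * (m + 1)) * z ^ m := by
    funext z
    rw [deriv_const_add, deriv_const_mul _ (differentiable_pow (m + 1)).differentiableAt,
      deriv_pow_field]
    push_cast
    ring
  have hiter : iteratedDeriv (m + 1) (fun z : ℂ => 1/2 + (1/4) * z ^ (m + 1)) 0 =
      (1/4 : ℂ) * (m + 1).factorial := by
    rw [iteratedDeriv_succ', hderiv,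
      iterDeriv_const_mul_ball _ (differentiable_pow m).differentiableOn m,
      iter_pow m m le_rfl]
    simp only [Nat.descFactorial_self, Nat.sub_self, pow_zero, mul_one]
    push_cast [Nat.factorial_succ]
    ring
  rw [taylorCoeff, hiter]
  rw [mul_div_assoc, div_self (by exact_mod_cast (m + 1).factorial_ne_zero), mul_one]
  norm_num [Complex.norm_ofNat]

/-- If `n ≥ 1` and `f0 ∈ B₁` maximizes `|c_n|` over `B₁`, then
`sup_{z ∈ Δ} |f0(z)| = 1`. -/
theorem maximizer_has_unit_sup (n : ℕ) (hn : 1 ≤ n)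
    (f0 : ℂ → ℂ) (hf0 : f0 ∈ B1)
    (hmax : ‖taylorCoeff f0 n‖ =
      sSup {x : ℝ | ∃ f ∈ B1, x = ‖taylorCoeff f n‖}) :
    sSup ((fun z => ‖f0 z‖) '' Metric.ball (0 : ℂ) 1) = 1 := by
  set S : Set ℝ := {x : ℝ | ∃ f ∈ B1, x = ‖taylorCoeff f n‖} with hS
  set T : Set ℝ := (fun z => ‖f0 z‖) '' Metric.ball (0 : ℂ) 1 with hT
  have hSbdd : BddAbove S := by
    refine ⟨2 ^ n, fun x hx => ?_⟩
    obtain ⟨f, hf, rfl⟩ := hx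
    exact coeff_bound hf n
  have hwS : (1/4 : ℝ) ∈ S := by
    refine ⟨fun z : ℂ => 1/2 + (1/4) * z ^ n, witness_mem n, (witness_coeff n hn).symm⟩
  have hcn : (1/4 : ℝ) ≤ ‖taylorCoeff f0 n‖ := by
    rw [hmax]; exact le_csSup hSbdd hwS
  have h0mem : (0 : ℂ) ∈ ball (0 : ℂ) 1 := by simp
  have hTne : T.Nonempty := ⟨‖f0 0‖, 0, h0mem, rfl⟩
  have hTbdd : BddAbove T := by
    refine ⟨1, fun x hx => ?_⟩
    obtain ⟨z, hz, rfl⟩ := hx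
    exact (hf0.2 z hz).2.le
  set M := sSup T with hM
  have hM1 : M ≤ 1 := csSup_le hTne (fun x hx => by
    obtain ⟨z, hz, rfl⟩ := hx; exact (hf0.2 z hz).2.le)
  have hub : ∀ z ∈ ball (0 : ℂ) 1, ‖f0 z‖ ≤ M :=
    fun z hz => le_csSup hTbdd ⟨z, hz, rfl⟩
  have hMpos : 0 < M := by
    have h1 : ‖f0 0‖ ≤ M := hub 0 h0mem
    have h2 : 0 < ‖f0 0‖ :=
      norm_pos_iff.mpr (hf0.2 0 h0mem).1
    linarith
  by_contra hne
  have hMlt : M < 1 := lt_of_le_of_ne hM1 hne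
  by_cases hcase : ∃ z0 ∈ ball (0 : ℂ) 1, ‖f0 z0‖ = M
  · -- max modulus: f0 constant, so coefficient 0, contradiction
    obtain ⟨z0, hz0, hz0M⟩ := hcase
    have hmaxon : IsMaxOn (norm ∘ f0) (ball (0 : ℂ) 1) z0 := by
      intro z hz
      simp only [Function.comp_apply, Set.mem_setOf_eq]
      calc ‖f0 z‖ = ‖f0 z‖ := rfl
        _ ≤ M := hub z hz
        _ = ‖f0 z0‖ := hz0M.symm
        _ = ‖f0 z0‖ := rfl
    have heq : Set.EqOn f0 (Function.const ℂ (f0 z0)) (ball (0 : ℂ) 1) :=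
      Complex.eqOn_of_isPreconnected_of_isMaxOn_norm (convex_ball _ _).isPreconnected
        isOpen_ball hf0.1 hz0 hmaxon
    have hev : f0 =ᶠ[nhds (0 : ℂ)] Function.const ℂ (f0 z0) :=
      Filter.eventuallyEq_of_mem (isOpen_ball.mem_nhds h0mem) heq
    have hzero : iteratedDeriv n f0 0 = 0 := by
      rw [hev.iteratedDeriv_eq n]
      obtain ⟨m, rfl⟩ : ∃ m, n = m + 1 := ⟨n - 1, by omega⟩
      rw [iteratedDeriv_succ']
      have : deriv (Function.const ℂ (f0 z0)) = fun _ : ℂ => (0 : ℂ) := by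
        funext x; exact deriv_const x _
      rw [this, iterDeriv_zero_fn]
    rw [taylorCoeff, hzero] at hcn
    simp at hcn
    linarith
  · -- strict case: rescale
    push_neg at hcase
    have hstrict : ∀ z ∈ ball (0 : ℂ) 1, ‖f0 z‖ < M :=
      fun z hz => lt_of_le_of_ne (hub z hz) (hcase z hz)
    set g : ℂ → ℂ := fun z => ((M : ℂ))⁻¹ * f0 z with hg
    have hMc : (M : ℂ) ≠ 0 := by exact_mod_cast hMpos.ne'
    have hgB1 : g ∈ B1 := by
      refine ⟨hf0.1.const_mul _, fun z hz => ?_⟩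
      constructor
      · exact mul_ne_zero (inv_ne_zero hMc) (hf0.2 z hz).1
      · rw [norm_mul, norm_inv, Complex.norm_real, Real.norm_eq_abs, abs_of_pos hMpos]
        rw [inv_mul_lt_one₀ hMpos]
        exact hstrict z hz
    have hgcoeff : ‖taylorCoeff g n‖ = M⁻¹ * ‖taylorCoeff f0 n‖ := by
      rw [taylorCoeff, taylorCoeff, iterDeriv_const_mul_ball _ hf0.1, mul_div_assoc,
        norm_mul, norm_inv, Complex.norm_real, Real.norm_eq_abs, abs_of_pos hMpos]
    have hle : ‖taylorCoeff g n‖ ≤ ‖taylorCoeff f0 n‖ := by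
      rw [hmax]
      exact le_csSup hSbdd ⟨g, hgB1, rfl⟩
    rw [hgcoeff] at hle
    have hinv : 1 < M⁻¹ := (one_lt_inv₀ hMpos).mpr hMlt
    nlinarith [hcn]
end

section
/- For the function κ₀(z) = exp((z − 1)/(z + 1)) = Σ_{n≥0} c_n zⁿ, the strict inequality |c_n(κ₀)| < 2/e holds for every integer n ≥ 2. (In particular, since Σ_{n≥0} |c_n|² = 1, c₀ = 1/e and c₁ = 2/e, one has |c_n|² ≤ 1 − 5/e² for n ≥ 2.) -/
open Real MeasureTheory intervalIntegral Metric NNReal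

lemma kappa0_differentiableAt {z : ℂ} (hz : z ≠ -1) : DifferentiableAt ℂ kappa0 z := by
  have h : z + 1 ≠ 0 := fun h => hz (by linear_combination h)
  have h1 : DifferentiableAt ℂ (fun z : ℂ => (z - 1) / (z + 1)) z :=
    DifferentiableAt.div (by fun_prop) (by fun_prop) h
  exact h1.cexp

lemma abs_kappa0_le {z : ℂ} (h : ‖z‖ ≤ 1) (hz : z ≠ -1) :
    ‖kappa0 z‖ ≤ 1 := by
  have h1 : z + 1 ≠ 0 := fun h => hz (by linear_combination h)
  rw [kappa0, Complex.norm_exp, Real.exp_le_one_iff]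
  rw [Complex.div_re]
  have hden : 0 < Complex.normSq (z + 1) := Complex.normSq_pos.2 h1
  have hnum : (z - 1).re * (z + 1).re + (z - 1).im * (z + 1).im = Complex.normSq z - 1 := by
    simp [Complex.normSq_apply, Complex.sub_re, Complex.add_re, Complex.sub_im, Complex.add_im]
    ring
  have hz1 : Complex.normSq z ≤ 1 := by
    rw [← Complex.sq_norm]; nlinarith [norm_nonneg z]
  rw [← add_div, hnum]
  exact div_nonpos_of_nonpos_of_nonneg (by linarith) hden.le

lemma kappa0_fpser {r : ℝ≥0} (hr0 : 0 < r) (hr1 : (r:ℝ) < 1) :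
    HasFPowerSeriesOnBall kappa0 (cauchyPowerSeries kappa0 0 r) 0 r := by
  apply DifferentiableOn.hasFPowerSeriesOnBall _ hr0
  intro z hz
  apply (kappa0_differentiableAt ?_).differentiableWithinAt
  intro h
  simp only [mem_closedBall, dist_zero_right, h, norm_neg, norm_one] at hz
  linarith

lemma taylorCoeff_eq (r : ℝ≥0) (hr0 : 0 < r) (hr1 : (r:ℝ) < 1) (k : ℕ) :
    taylorCoeff kappa0 k = cauchyPowerSeries kappa0 0 r k (fun _ => 1) := by
  have h := (kappa0_fpser hr0 hr1).factorial_smul (1:ℂ) k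
  rw [taylorCoeff, iteratedDeriv_eq_iteratedFDeriv, ← h, nsmul_eq_mul]
  rw [mul_div_cancel_left₀]
  exact_mod_cast Nat.factorial_ne_zero k

lemma taylorCoeff_integral {r : ℝ} (hr0 : 0 < r) (hr1 : r < 1) (k : ℕ) :
    (2 * π : ℂ) * taylorCoeff kappa0 k =
      ∫ θ in (0:ℝ)..2*π, (circleMap 0 r θ)⁻¹ ^ k * kappa0 (circleMap 0 r θ) := by
  have hR0 : (0:ℝ≥0) < ⟨r, hr0.le⟩ := hr0
  rw [taylorCoeff_eq ⟨r, hr0.le⟩ hR0 hr1, cauchyPowerSeries_apply]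
  have hne : ∀ θ : ℝ, circleMap 0 r θ ≠ 0 := fun θ => by
    simp only [circleMap, Complex.ofReal_zero, zero_add]
    exact mul_ne_zero (Complex.ofReal_ne_zero.2 hr0.ne') (Complex.exp_ne_zero _)
  have key : ∀ θ : ℝ, deriv (circleMap 0 r) θ •
      ((((1:ℂ)/(circleMap 0 r θ - 0))^k • ((circleMap 0 r θ - 0)⁻¹ • kappa0 (circleMap 0 r θ))))
      = Complex.I * ((circleMap 0 r θ)⁻¹ ^ k * kappa0 (circleMap 0 r θ)) := by
    intro θ
    simp only [deriv_circleMap, smul_eq_mul, sub_zero, one_div]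
    field_simp
    rw [div_eq_iff (hne θ)]
    ring
  show (2 * (π:ℂ)) * ((2 * (π:ℂ) * Complex.I)⁻¹ •
      ∫ θ in (0:ℝ)..2*π, deriv (circleMap 0 r) θ •
        ((((1:ℂ)/(circleMap 0 r θ - 0))^k • ((circleMap 0 r θ - 0)⁻¹ • kappa0 (circleMap 0 r θ))))) = _
  rw [intervalIntegral.integral_congr (g := fun θ =>
      Complex.I * ((circleMap 0 r θ)⁻¹ ^ k * kappa0 (circleMap 0 r θ))) (fun θ _ => key θ)]
  rw [intervalIntegral.integral_const_mul, smul_eq_mul]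
  have hπ : (π:ℂ) ≠ 0 := by exact_mod_cast Real.pi_ne_zero
  field_simp [Complex.I_ne_zero]

lemma integral_exp_int_zero {m : ℤ} (hm : m ≠ 0) :
    ∫ θ in (0:ℝ)..2*π, Complex.exp (m * θ * Complex.I) = 0 := by
  have hc : (m : ℂ) * Complex.I ≠ 0 := by
    simp [Complex.I_ne_zero, hm]
  have key : ∀ θ : ℝ, Complex.exp ((m:ℂ) * θ * Complex.I)
      = Complex.exp (((m:ℂ) * Complex.I) * θ) := fun θ => by ring_nf
  rw [intervalIntegral.integral_congr (g := fun θ : ℝ =>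
      Complex.exp (((m:ℂ) * Complex.I) * (θ:ℝ))) (fun θ _ => key θ)]
  rw [integral_exp_mul_complex hc]
  have h1 : (m:ℂ) * Complex.I * ((2:ℝ)*π : ℝ) = m * (2 * π * Complex.I) := by
    push_cast; ring
  rw [h1, Complex.exp_int_mul_two_pi_mul_I]
  simp

lemma integral_circleMap_zero {r : ℝ} (hr0 : 0 < r) {k m : ℕ} (h : k ≠ m) :
    ∫ θ in (0:ℝ)..2*π, (circleMap 0 r θ)⁻¹ ^ k * (circleMap 0 r θ) ^ m = 0 := by
  have hm : ((m:ℤ) - (k:ℤ)) ≠ 0 := by omega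
  have key : ∀ θ:ℝ, (circleMap 0 r θ)⁻¹ ^ k * (circleMap 0 r θ) ^ m
      = ((r:ℂ)⁻¹^k * (r:ℂ)^m) * Complex.exp (((((m:ℤ) - (k:ℤ)):ℤ):ℂ) * θ * Complex.I) := by
    intro θ
    have h1 : circleMap 0 r θ = (r:ℂ) * Complex.exp (θ * Complex.I) := by simp [circleMap]
    rw [h1, mul_inv, mul_pow, mul_pow, ← Complex.exp_neg, ← Complex.exp_nat_mul,
      ← Complex.exp_nat_mul, mul_mul_mul_comm, ← Complex.exp_add]
    congr 1
    push_cast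
    ring
  rw [intervalIntegral.integral_congr (g := fun θ : ℝ =>
      ((r:ℂ)⁻¹^k * (r:ℂ)^m) * Complex.exp (((((m:ℤ) - (k:ℤ)):ℤ):ℂ) * θ * Complex.I))
      (fun θ _ => key θ)]
  rw [intervalIntegral.integral_const_mul, integral_exp_int_zero hm, mul_zero]

lemma cs_integral {u : ℝ → ℝ} (hu : Continuous u) :
    (∫ θ in (0:ℝ)..2*π, u θ)^2 ≤ (2*π) * ∫ θ in (0:ℝ)..2*π, (u θ)^2 := by
  set S := ∫ θ in (0:ℝ)..2*π, u θ with hS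
  have h2π : (0:ℝ) < 2*π := Real.two_pi_pos
  have hi1 : IntervalIntegrable u volume 0 (2*π) := hu.intervalIntegrable _ _
  have hi2 : IntervalIntegrable (fun θ => (u θ)^2) volume 0 (2*π) :=
    (hu.pow 2).intervalIntegrable _ _
  have h0 : (0:ℝ) ≤ ∫ θ in (0:ℝ)..2*π, (u θ - S/(2*π))^2 :=
    intervalIntegral.integral_nonneg h2π.le (fun θ _ => sq_nonneg _)
  have hexp : ∫ θ in (0:ℝ)..2*π, (u θ - S/(2*π))^2
      = (∫ θ in (0:ℝ)..2*π, (u θ)^2) - (2*(S/(2*π)))*S + (2*π-0) • ((S/(2*π))^2) := by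
    rw [intervalIntegral.integral_congr (g := fun θ =>
        (u θ)^2 - (2*(S/(2*π))) * u θ + (S/(2*π))^2) (fun θ _ => by ring)]
    rw [intervalIntegral.integral_add (hi2.sub (hi1.const_mul _)) intervalIntegrable_const,
        intervalIntegral.integral_sub hi2 (hi1.const_mul _),
        intervalIntegral.integral_const_mul, intervalIntegral.integral_const, ← hS]
  rw [hexp] at h0
  simp only [smul_eq_mul, sub_zero] at h0
  have hπ := Real.pi_pos
  have h1 : 2*π*(S/(2*π))^2 = S^2/(2*π) := by field_simp
  have h2 : 2*(S/(2*π))*S = 2*(S^2/(2*π)) := by field_simp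
  rw [h1, h2] at h0
  have h3 : S^2/(2*π) ≤ ∫ θ in (0:ℝ)..2*π, (u θ)^2 := by linarith
  rw [div_le_iff₀ h2π] at h3
  linarith

lemma taylorCoeff_kappa0_zero : taylorCoeff kappa0 0 = Complex.exp (-1) := by
  simp only [taylorCoeff, iteratedDeriv_zero, Nat.factorial_zero, Nat.cast_one, div_one, kappa0]
  norm_num

lemma taylorCoeff_kappa0_one : taylorCoeff kappa0 1 = 2 * Complex.exp (-1) := by
  have h : HasDerivAt (fun z : ℂ => (z - 1)/(z + 1)) 2 0 := by
    have h1 : HasDerivAt (fun z : ℂ => z - 1) 1 0 := (hasDerivAt_id 0).sub_const 1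
    have h2 : HasDerivAt (fun z : ℂ => z + 1) 1 0 := (hasDerivAt_id 0).add_const 1
    have h3 := h1.div h2 (by norm_num)
    norm_num at h3
    exact h3
  have hk : HasDerivAt kappa0 (Complex.exp (((0:ℂ)-1)/((0:ℂ)+1)) * 2) 0 := by
    have h4 := h.cexp
    exact h4
  rw [taylorCoeff, iteratedDeriv_one, hk.deriv]
  norm_num
  ring

lemma master {r : ℝ} (hr0 : 0 < r) (hr1 : r < 1) {n : ℕ} (hn : 2 ≤ n) :
    ‖taylorCoeff kappa0 n‖ ^ 2 * r ^ (2*n)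
      ≤ 1 - Complex.normSq (taylorCoeff kappa0 0)
          - Complex.normSq (taylorCoeff kappa0 1) * r^2 := by
  have h2π : (0:ℝ) < 2*π := Real.two_pi_pos
  set c0 := taylorCoeff kappa0 0 with hc0
  set c1 := taylorCoeff kappa0 1 with hc1
  set cn := taylorCoeff kappa0 n with hcn
  set z : ℝ → ℂ := circleMap 0 r with hz
  set F : ℝ → ℂ := fun θ => kappa0 (z θ) with hF
  set P : ℝ → ℂ := fun θ => c0 + c1 * z θ with hP
  set G : ℝ → ℂ := fun θ => F θ - P θ with hG
  have hne : ∀ θ : ℝ, z θ ≠ 0 := fun θ => by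
    simp only [hz, circleMap, Complex.ofReal_zero, zero_add]
    exact mul_ne_zero (Complex.ofReal_ne_zero.2 hr0.ne') (Complex.exp_ne_zero _)
  have habs : ∀ θ : ℝ, ‖z θ‖ = r := fun θ => by
    rw [hz, norm_circleMap_zero, abs_of_pos hr0]
  have hzne1 : ∀ θ : ℝ, z θ ≠ -1 := fun θ h => by
    have hx := habs θ; rw [h] at hx; simp at hx; exact absurd hx.symm hr1.ne
  -- continuity
  have hzc : Continuous z := continuous_circleMap 0 r
  have hFc : Continuous F := continuous_iff_continuousAt.2 fun θ =>
    ((kappa0_differentiableAt (hzne1 θ)).continuousAt).comp hzc.continuousAt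
  have hPc : Continuous P := continuous_const.add (continuous_const.mul hzc)
  have hGc : Continuous G := hFc.sub hPc
  have hinvc : Continuous (fun θ => (z θ)⁻¹ ^ n) := (hzc.inv₀ hne).pow n
  -- Part 1 : 2π cn = ∫ zθ⁻¹^n * G θ
  have h_e0 : (∫ θ in (0:ℝ)..2*π, (z θ)⁻¹ ^ n) = 0 := by
    have := integral_circleMap_zero hr0 (k := n) (m := 0) (by omega)
    simpa using this
  have h_e1 : (∫ θ in (0:ℝ)..2*π, (z θ)⁻¹ ^ n * z θ) = 0 := by
    have := integral_circleMap_zero hr0 (k := n) (m := 1) (by omega)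
    simpa using this
  have key1 : (2*π:ℂ) * cn = ∫ θ in (0:ℝ)..2*π, (z θ)⁻¹ ^ n * G θ := by
    rw [intervalIntegral.integral_congr (g := fun θ =>
        (z θ)⁻¹ ^ n * F θ - (c0 * (z θ)⁻¹ ^ n + c1 * ((z θ)⁻¹ ^ n * z θ)))
        (fun θ _ => by simp only [hG, hP]; ring)]
    rw [intervalIntegral.integral_sub (f := fun θ => (z θ)⁻¹ ^ n * F θ)
          (g := fun θ => c0 * (z θ)⁻¹ ^ n + c1 * ((z θ)⁻¹ ^ n * z θ)) ((hinvc.mul hFc).intervalIntegrable _ _)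
        (((continuous_const.mul hinvc).add (continuous_const.mul (hinvc.mul hzc))).intervalIntegrable _ _),
       intervalIntegral.integral_add (f := fun θ => c0 * (z θ)⁻¹ ^ n)
          (g := fun θ => c1 * ((z θ)⁻¹ ^ n * z θ)) ((continuous_const.mul hinvc).intervalIntegrable _ _)
        ((continuous_const.mul (hinvc.mul hzc)).intervalIntegrable _ _),
       intervalIntegral.integral_const_mul, intervalIntegral.integral_const_mul,
       h_e0, h_e1, taylorCoeff_integral hr0 hr1 n]
    ring
  -- Part 2 : 2π |cn| ≤ r⁻¹^n ∫ |G|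
  have key2 : 2*π*‖cn‖ ≤ r⁻¹^n * ∫ θ in (0:ℝ)..2*π, ‖G θ‖ := by
    have h1 : ‖(2*π:ℂ) * cn‖ ≤ ∫ θ in (0:ℝ)..2*π, ‖(z θ)⁻¹ ^ n * G θ‖ := by
      rw [key1]
      exact intervalIntegral.norm_integral_le_integral_norm h2π.le
    have h2 : (∫ θ in (0:ℝ)..2*π, ‖(z θ)⁻¹ ^ n * G θ‖)
        = r⁻¹^n * ∫ θ in (0:ℝ)..2*π, ‖G θ‖ := by
      rw [← intervalIntegral.integral_const_mul]
      refine intervalIntegral.integral_congr fun θ _ => ?_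
      simp only [norm_mul, norm_pow, norm_inv, habs θ]
    rw [h2] at h1
    refine le_trans ?_ h1
    rw [norm_mul]
    simp [abs_of_pos Real.pi_pos]
  -- Part 3 : ∫ normSq G ≤ 2π (1 - normSq c0 - normSq c1 r²)
  have hconjz : ∀ θ : ℝ, (starRingEnd ℂ) (z θ) = (r:ℂ)^2 * (z θ)⁻¹ := by
    intro θ
    have h1 : z θ = (r:ℂ) * Complex.exp (θ * Complex.I) := by simp [hz, circleMap]
    rw [h1, map_mul, Complex.conj_ofReal, ← Complex.exp_conj]
    have : (starRingEnd ℂ) (θ * Complex.I) = -(θ * Complex.I) := by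
      simp [Complex.conj_I, mul_comm]
    rw [this, Complex.exp_neg]
    have hrne : (r:ℂ) ≠ 0 := Complex.ofReal_ne_zero.2 hr0.ne'
    field_simp
  have hIF : ∀ k : ℕ, (∫ θ in (0:ℝ)..2*π, (z θ)⁻¹ ^ k * F θ) = (2*π:ℂ) * taylorCoeff kappa0 k :=
    fun k => (taylorCoeff_integral hr0 hr1 k).symm
  have hFP : (∫ θ in (0:ℝ)..2*π, F θ * (starRingEnd ℂ) (P θ))
      = (2*π:ℂ) * ((Complex.normSq c0 : ℝ) + (Complex.normSq c1 : ℝ) * (r:ℂ)^2) := by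
    rw [intervalIntegral.integral_congr (g := fun θ =>
        (starRingEnd ℂ) c0 * ((z θ)⁻¹ ^ 0 * F θ)
          + ((starRingEnd ℂ) c1 * (r:ℂ)^2) * ((z θ)⁻¹ ^ 1 * F θ))
        (fun θ _ => by
          simp only [hP, map_add, map_mul, hconjz θ, pow_zero, pow_one, one_mul]
          ring)]
    rw [intervalIntegral.integral_add (f := fun θ => (starRingEnd ℂ) c0 * ((z θ)⁻¹ ^ 0 * F θ))
        (g := fun θ => ((starRingEnd ℂ) c1 * (r:ℂ)^2) * ((z θ)⁻¹ ^ 1 * F θ))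
        ((continuous_const.mul (((hzc.inv₀ hne).pow 0).mul hFc)).intervalIntegrable _ _)
        ((continuous_const.mul (((hzc.inv₀ hne).pow 1).mul hFc)).intervalIntegrable _ _),
       intervalIntegral.integral_const_mul, intervalIntegral.integral_const_mul, hIF 0, hIF 1]
    have m0 : ((Complex.normSq c0:ℝ):ℂ) = c0 * (starRingEnd ℂ) c0 := (Complex.mul_conj c0).symm
    have m1 : ((Complex.normSq c1:ℝ):ℂ) = c1 * (starRingEnd ℂ) c1 := (Complex.mul_conj c1).symm
    rw [m0, m1]
    ring
  -- ∫ normSq P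
  have hint_zinv : (∫ θ in (0:ℝ)..2*π, (z θ)⁻¹) = 0 := by
    have := integral_circleMap_zero hr0 (k := 1) (m := 0) (by omega)
    simpa using this
  have hNP : (∫ θ in (0:ℝ)..2*π, Complex.normSq (P θ))
      = 2*π*(Complex.normSq c0 + Complex.normSq c1 * r^2) := by
    have hptw : ∀ θ : ℝ, Complex.normSq (P θ)
        = (Complex.normSq c0 + Complex.normSq c1 * r^2)
          + 2 * (c0 * (starRingEnd ℂ) c1 * (r:ℂ)^2 * (z θ)⁻¹).re := by
      intro θ
      show Complex.normSq (c0 + c1 * z θ) = _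
      rw [Complex.normSq_add, Complex.normSq_mul]
      rw [show Complex.normSq (z θ) = r^2 from by rw [← Complex.sq_norm, habs θ]]
      rw [show (starRingEnd ℂ) (c1 * z θ)
          = (starRingEnd ℂ) c1 * ((r:ℂ)^2 * (z θ)⁻¹) from by rw [map_mul, hconjz θ]]
      rw [show c0 * ((starRingEnd ℂ) c1 * ((r:ℂ)^2 * (z θ)⁻¹))
          = c0 * (starRingEnd ℂ) c1 * (r:ℂ)^2 * (z θ)⁻¹ from by ring]
    rw [intervalIntegral.integral_congr (g := fun θ =>
        (Complex.normSq c0 + Complex.normSq c1 * r^2)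
          + 2 * (c0 * (starRingEnd ℂ) c1 * (r:ℂ)^2 * (z θ)⁻¹).re) (fun θ _ => hptw θ)]
    have hiz : IntervalIntegrable (fun θ => c0 * (starRingEnd ℂ) c1 * (r:ℂ)^2 * (z θ)⁻¹)
        volume 0 (2*π) := (continuous_const.mul (hzc.inv₀ hne)).intervalIntegrable _ _
    have hre0 : (∫ θ in (0:ℝ)..2*π, (c0 * (starRingEnd ℂ) c1 * (r:ℂ)^2 * (z θ)⁻¹).re) = 0 := by
      have heq : (∫ θ in (0:ℝ)..2*π, Complex.reCLM (c0 * (starRingEnd ℂ) c1 * (r:ℂ)^2 * (z θ)⁻¹))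
          = Complex.reCLM (∫ θ in (0:ℝ)..2*π, c0 * (starRingEnd ℂ) c1 * (r:ℂ)^2 * (z θ)⁻¹) :=
        Complex.reCLM.intervalIntegral_comp_comm hiz
      simp only [Complex.reCLM_apply] at heq
      rw [heq, intervalIntegral.integral_const_mul, hint_zinv, mul_zero, Complex.zero_re]
    rw [intervalIntegral.integral_add intervalIntegrable_const
        (by
          apply Continuous.intervalIntegrable
          exact continuous_const.mul
            (Complex.continuous_re.comp (continuous_const.mul (hzc.inv₀ hne)))),
       intervalIntegral.integral_const_mul, hre0, intervalIntegral.integral_const,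
       mul_zero, add_zero, smul_eq_mul]
    ring
  -- ∫ normSq F ≤ 2π
  have hNF : (∫ θ in (0:ℝ)..2*π, Complex.normSq (F θ)) ≤ 2*π := by
    have hb : ∀ θ ∈ Set.Icc (0:ℝ) (2*π), Complex.normSq (F θ) ≤ 1 := by
      intro θ _
      have h1 : ‖F θ‖ ≤ 1 := abs_kappa0_le (by rw [habs θ]; exact hr1.le) (hzne1 θ)
      rw [← Complex.sq_norm]
      nlinarith [norm_nonneg (F θ)]
    calc (∫ θ in (0:ℝ)..2*π, Complex.normSq (F θ))
        ≤ ∫ _θ in (0:ℝ)..2*π, (1:ℝ) := by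
          apply intervalIntegral.integral_mono_on h2π.le
            ((Complex.continuous_normSq.comp hFc).intervalIntegrable _ _)
            intervalIntegrable_const hb
      _ = 2*π := by simp
  -- cross term
  have hre2 : (∫ θ in (0:ℝ)..2*π, (F θ * (starRingEnd ℂ) (P θ)).re)
      = 2*π*(Complex.normSq c0 + Complex.normSq c1 * r^2) := by
    have hiz : IntervalIntegrable (fun θ => F θ * (starRingEnd ℂ) (P θ)) volume 0 (2*π) :=
      (hFc.mul (Complex.continuous_conj.comp hPc)).intervalIntegrable _ _
    have heq : (∫ θ in (0:ℝ)..2*π, Complex.reCLM (F θ * (starRingEnd ℂ) (P θ)))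
        = Complex.reCLM (∫ θ in (0:ℝ)..2*π, F θ * (starRingEnd ℂ) (P θ)) :=
      Complex.reCLM.intervalIntegral_comp_comm hiz
    simp only [Complex.reCLM_apply] at heq
    rw [heq, hFP]
    have : ((Complex.normSq c0:ℝ):ℂ) + ((Complex.normSq c1:ℝ):ℂ) * (r:ℂ)^2
        = (((Complex.normSq c0 + Complex.normSq c1 * r^2 : ℝ)):ℂ) := by push_cast; ring
    rw [this, show (2*(π:ℂ)) = (((2*π : ℝ)):ℂ) by push_cast; ring, ← Complex.ofReal_mul,
      Complex.ofReal_re]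
  -- assemble: ∫ normSq G ≤ 2π (1 - normSq c0 - normSq c1 r²)
  have hA : (∫ θ in (0:ℝ)..2*π, Complex.normSq (G θ))
      ≤ 2*π*(1 - Complex.normSq c0 - Complex.normSq c1 * r^2) := by
    have hptw : ∀ θ : ℝ, Complex.normSq (G θ)
        = Complex.normSq (F θ) - 2*(F θ * (starRingEnd ℂ) (P θ)).re + Complex.normSq (P θ) := by
      intro θ
      simp only [hG, Complex.normSq_sub]
      ring
    rw [intervalIntegral.integral_congr (g := fun θ =>
        Complex.normSq (F θ) - 2*(F θ * (starRingEnd ℂ) (P θ)).re + Complex.normSq (P θ))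
        (fun θ _ => hptw θ)]
    have hi1 : IntervalIntegrable (fun θ => Complex.normSq (F θ)) volume 0 (2*π) :=
      (Complex.continuous_normSq.comp hFc).intervalIntegrable _ _
    have hi2 : IntervalIntegrable (fun θ => 2*(F θ * (starRingEnd ℂ) (P θ)).re) volume 0 (2*π) :=
      (continuous_const.mul (Complex.continuous_re.comp (hFc.mul
        (Complex.continuous_conj.comp hPc)))).intervalIntegrable _ _
    have hi3 : IntervalIntegrable (fun θ => Complex.normSq (P θ)) volume 0 (2*π) :=
      (Complex.continuous_normSq.comp hPc).intervalIntegrable _ _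
    rw [intervalIntegral.integral_add (hi1.sub hi2) hi3,
       intervalIntegral.integral_sub hi1 hi2, intervalIntegral.integral_const_mul, hre2, hNP]
    linarith
  -- Cauchy-Schwarz
  have hCS : (∫ θ in (0:ℝ)..2*π, ‖G θ‖)^2
      ≤ (2*π) * ∫ θ in (0:ℝ)..2*π, Complex.normSq (G θ) := by
    have h := cs_integral (u := fun θ => ‖G θ‖) (continuous_norm.comp hGc)
    have heq : (∫ θ in (0:ℝ)..2*π, (‖G θ‖)^2)
        = ∫ θ in (0:ℝ)..2*π, Complex.normSq (G θ) :=
      intervalIntegral.integral_congr fun θ _ => Complex.sq_norm _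
    rw [heq] at h
    exact h
  -- conclude
  have hrpow : (0:ℝ) < r^(2*n) := pow_pos hr0 _
  have hrinv : r⁻¹^n * r^n = 1 := by
    rw [← mul_pow, inv_mul_cancel₀ hr0.ne', one_pow]
  have habsn : 0 ≤ ‖cn‖ := norm_nonneg cn
  have hGnn : 0 ≤ ∫ θ in (0:ℝ)..2*π, ‖G θ‖ :=
    intervalIntegral.integral_nonneg h2π.le (fun θ _ => norm_nonneg _)
  have step1 : (2*π*‖cn‖)^2 ≤ (r⁻¹^n)^2 * ((2*π)^2 *
      (1 - Complex.normSq c0 - Complex.normSq c1 * r^2)) := by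
    calc (2*π*‖cn‖)^2
        ≤ (r⁻¹^n * ∫ θ in (0:ℝ)..2*π, ‖G θ‖)^2 := by
          apply pow_le_pow_left₀ (by positivity) key2
      _ = (r⁻¹^n)^2 * (∫ θ in (0:ℝ)..2*π, ‖G θ‖)^2 := by ring
      _ ≤ (r⁻¹^n)^2 * ((2*π) * ∫ θ in (0:ℝ)..2*π, Complex.normSq (G θ)) := by
          apply mul_le_mul_of_nonneg_left hCS (by positivity)
      _ ≤ (r⁻¹^n)^2 * ((2*π) * (2*π*(1 - Complex.normSq c0 - Complex.normSq c1 * r^2))) := by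
          apply mul_le_mul_of_nonneg_left _ (by positivity)
          exact mul_le_mul_of_nonneg_left hA h2π.le
      _ = (r⁻¹^n)^2 * ((2*π)^2 * (1 - Complex.normSq c0 - Complex.normSq c1 * r^2)) := by ring
  have hr2n : (r⁻¹^n)^2 * r^(2*n) = 1 := by
    have h1 : (r⁻¹ ^ n) ^ 2 * r ^ (2 * n) = (r⁻¹ * r) ^ (2 * n) := by
      rw [mul_pow, ← pow_mul, mul_comm n 2]
    rw [h1, inv_mul_cancel₀ hr0.ne', one_pow]
  have step2 : (2*π)^2 * (‖cn‖^2 * r^(2*n))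
      ≤ (2*π)^2 * (1 - Complex.normSq c0 - Complex.normSq c1 * r^2) := by
    calc (2*π)^2 * (‖cn‖^2 * r^(2*n)) = (2*π*‖cn‖)^2 * r^(2*n) := by ring
      _ ≤ ((r⁻¹^n)^2 * ((2*π)^2 * (1 - Complex.normSq c0 - Complex.normSq c1 * r^2))) * r^(2*n) :=
          mul_le_mul_of_nonneg_right step1 hrpow.le
      _ = ((r⁻¹^n)^2 * r^(2*n)) * ((2*π)^2 * (1 - Complex.normSq c0 - Complex.normSq c1 * r^2)) := by
          ring
      _ = (2*π)^2 * (1 - Complex.normSq c0 - Complex.normSq c1 * r^2) := by rw [hr2n, one_mul]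
  exact le_of_mul_le_mul_left step2 (by positivity)

lemma numeric_bound :
    1 - Real.exp (-1) ^ 2 - 4 * Real.exp (-1) ^ 2 * Real.exp (-(1/10))
      < (2 / Real.exp 1)^2 * Real.exp (-(1/5)) := by
  set a := Real.exp (1/10) with ha
  set E := Real.exp 1 with hE
  have ha0 : 0 < a := Real.exp_pos _
  have hE0 : 0 < E := Real.exp_pos _
  have haE : a ^ 10 = E := by
    rw [ha, hE, ← Real.exp_nat_mul]
    norm_num
  have ha1 : 1.1 ≤ a := by
    have h := Real.add_one_le_exp (1/10 : ℝ)
    rw [← ha] at h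
    linarith
  have ha2 : a ≤ 1.12 := by
    by_contra hc
    push_neg at hc
    have h1 : (1.12:ℝ)^10 ≤ a^10 := pow_le_pow_left₀ (by norm_num) hc.le 10
    rw [haE] at h1
    have h2 : E < 2.7182818286 := Real.exp_one_lt_d9
    norm_num at h1
    linarith
  have hE2 : E^2 < 7.3890562 := by
    have h2 : E < 2.7182818286 := Real.exp_one_lt_d9
    nlinarith
  have key : E^2*a^2 - a^2 - 4*a < 4 := by nlinarith
  have h5 : Real.exp (-(1/5)) = (a^2)⁻¹ := by
    rw [Real.exp_neg]
    congr 1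
    rw [ha, ← Real.exp_nat_mul]
    norm_num
  have h10 : Real.exp (-(1/10)) = a⁻¹ := by rw [Real.exp_neg, ha]
  have h1 : Real.exp (-1) = E⁻¹ := by rw [Real.exp_neg, hE]
  rw [h5, h10, h1]
  have diff : (2/E)^2 * (a^2)⁻¹ - (1 - E⁻¹^2 - 4*E⁻¹^2*a⁻¹)
      = (4 - (E^2*a^2 - a^2 - 4*a)) / (E^2*a^2) := by
    field_simp
    ring
  have hpos : 0 < (4 - (E^2*a^2 - a^2 - 4*a)) / (E^2*a^2) :=
    div_pos (by linarith) (by positivity)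
  rw [← diff] at hpos
  linarith


/-- For `κ₀(z) = exp((z-1)/(z+1)) = Σ c_n zⁿ`, the strict inequality
`|c_n(κ₀)| < 2/e` holds for every `n ≥ 2`. -/
theorem kappa0_higher_coeffs_lt (n : ℕ) (hn : 2 ≤ n) :
    ‖taylorCoeff kappa0 n‖ < 2 / Real.exp 1 := by
  have hn0 : (0:ℝ) < (n:ℝ) := by
    have : (2:ℝ) ≤ (n:ℝ) := by exact_mod_cast hn
    linarith
  set r := Real.exp (-(1/(10*(n:ℝ)))) with hr
  have hr0 : 0 < r := Real.exp_pos _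
  have hr1 : r < 1 := by
    rw [hr, Real.exp_lt_one_iff]
    have : 0 < (1:ℝ)/(10*(n:ℝ)) := by positivity
    linarith
  have hm := master hr0 hr1 hn
  rw [taylorCoeff_kappa0_zero, taylorCoeff_kappa0_one] at hm
  have hnc0 : Complex.normSq (Complex.exp (-1)) = Real.exp (-1)^2 := by
    rw [show ((-1:ℂ)) = ((-1:ℝ):ℂ) by norm_num, ← Complex.ofReal_exp, Complex.normSq_ofReal, sq]
  have hnc1 : Complex.normSq (2 * Complex.exp (-1)) = 4 * Real.exp (-1)^2 := by
    rw [Complex.normSq_mul, hnc0, show Complex.normSq 2 = 4 from by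
      norm_num [Complex.normSq_apply]]
  rw [hnc0, hnc1] at hm
  have hr2n : r^(2*n) = Real.exp (-(1/5)) := by
    rw [hr, ← Real.exp_nat_mul]
    congr 1
    push_cast
    field_simp
    ring
  have hr2 : Real.exp (-(1/10)) ≤ r^2 := by
    rw [hr, ← Real.exp_nat_mul]
    apply Real.exp_le_exp.2
    have h1 : ((2:ℕ):ℝ) * (-(1/(10*(n:ℝ)))) = -(1/(5*(n:ℝ))) := by
      push_cast
      field_simp
      ring
    rw [h1, neg_le_neg_iff]
    have h2 : (10:ℝ) ≤ 5*(n:ℝ) := by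
      have : (2:ℝ) ≤ (n:ℝ) := by exact_mod_cast hn
      linarith
    calc (1:ℝ)/(5*(n:ℝ)) ≤ 1/10 := by
          apply one_div_le_one_div_of_le (by norm_num) h2
      _ = 1/10 := rfl
  have hchain : ‖taylorCoeff kappa0 n‖^2 * Real.exp (-(1/5))
      ≤ 1 - Real.exp (-1)^2 - 4*Real.exp (-1)^2 * Real.exp (-(1/10)) := by
    rw [← hr2n]
    refine hm.trans ?_
    have hpos : (0:ℝ) ≤ 4*Real.exp (-1)^2 := by positivity
    nlinarith [mul_le_mul_of_nonneg_left hr2 hpos]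
  have hlt : ‖taylorCoeff kappa0 n‖^2 * Real.exp (-(1/5))
      < (2/Real.exp 1)^2 * Real.exp (-(1/5)) := lt_of_le_of_lt hchain numeric_bound
  have hsq : ‖taylorCoeff kappa0 n‖^2 < (2/Real.exp 1)^2 :=
    lt_of_mul_lt_mul_right hlt (Real.exp_pos _).le
  exact lt_of_pow_lt_pow_left₀ 2 (by positivity) hsq
end

section
/- (Infinitesimal form of the extremality of κ₀.) For every point a ∈ Δ one has (1 − |a|²)·|κ₀′(a)| ≤ 2/e, and the maximum value 2/e is attained (in particular at a = 0, where κ₀′(0) = 2/e). Consequently, for every f ∈ B₁ written as f = κ₀ ∘ f̂ with f̂ : Δ → Δ holomorphic, |c₁(f)| = |κ₀′(f̂(0))|·|f̂′(0)| ≤ (1 − |f̂(0)|²)·|κ₀′(f̂(0))| ≤ 2/e. -/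
open Complex Metric

lemma texp_le (t : ℝ) : t * Real.exp (-t) ≤ 1 / Real.exp 1 := by
  have h1 : t ≤ Real.exp (t - 1) := by linarith [Real.add_one_le_exp (t - 1)]
  rw [Real.exp_sub] at h1
  rw [Real.exp_neg]
  refine le_trans (mul_le_mul_of_nonneg_right h1 (by positivity)) (le_of_eq ?_)
  field_simp

lemma add_one_ne {a : ℂ} (h : ‖a‖ < 1) : a + 1 ≠ 0 := by
  intro hc
  have : a = -1 := by linear_combination hc
  rw [this] at h
  simp at h

lemma kappa0_hasDerivAt {a : ℂ} (h : a + 1 ≠ 0) :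
    HasDerivAt kappa0 (kappa0 a * (2 / (a + 1) ^ 2)) a := by
  have h1 : HasDerivAt (fun z : ℂ => (z - 1) / (z + 1)) (2 / (a + 1) ^ 2) a := by
    have hu : HasDerivAt (fun z : ℂ => z - 1) 1 a := (hasDerivAt_id a).sub_const 1
    have hv : HasDerivAt (fun z : ℂ => z + 1) 1 a := (hasDerivAt_id a).add_const 1
    have := hu.div hv h
    refine this.congr_deriv ?_
    ring
  exact h1.cexp.congr_deriv (by unfold kappa0; ring)

lemma part1 (a : ℂ) (ha : ‖a‖ < 1) :
    (1 - ‖a‖ ^ 2) * ‖deriv kappa0 a‖ ≤ 2 / Real.exp 1 := by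
  have hne : a + 1 ≠ 0 := add_one_ne ha
  have hN : 0 < Complex.normSq (a + 1) := Complex.normSq_pos.2 hne
  rw [(kappa0_hasDerivAt hne).deriv]
  rw [norm_mul, norm_div, norm_pow]
  have habs : ‖kappa0 a‖ = Real.exp (((a - 1) / (a + 1)).re) := Complex.norm_exp _
  rw [habs]
  have hre : ((a - 1) / (a + 1)).re =
      -((1 - (a.re ^ 2 + a.im ^ 2)) / Complex.normSq (a + 1)) := by
    rw [Complex.div_re]
    rw [Complex.normSq_apply]
    simp [Complex.add_re, Complex.add_im, Complex.sub_re, Complex.sub_im]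
    field_simp
    ring
  rw [hre]
  have hs : ‖a‖ ^ 2 = a.re ^ 2 + a.im ^ 2 := by
    rw [Complex.sq_norm, Complex.normSq_apply]; ring
  rw [hs, Complex.sq_norm (a + 1)]
  set N := Complex.normSq (a + 1) with hNdef
  set s := a.re ^ 2 + a.im ^ 2 with hsdef
  have h2 : ‖(2:ℂ)‖ = 2 := by norm_num
  rw [h2]
  set t := (1 - s) / N with htdef
  have key := texp_le t
  have : (1 - s) * (Real.exp (-((1 - s) / N)) * (2 / N)) = 2 * (t * Real.exp (-t)) := by
    rw [htdef]
    field_simp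
  rw [this]
  calc 2 * (t * Real.exp (-t)) ≤ 2 * (1 / Real.exp 1) := by linarith
    _ = 2 / Real.exp 1 := by ring

lemma part2 : deriv kappa0 0 = ((2 / Real.exp 1 : ℝ) : ℂ) := by
  rw [(kappa0_hasDerivAt (a := 0) (by norm_num)).deriv]
  unfold kappa0
  rw [show ((0:ℂ) - 1) / ((0:ℂ) + 1) = ((-1 : ℝ) : ℂ) by norm_num,
    ← Complex.ofReal_exp, Real.exp_neg]
  have : Real.exp 1 ≠ 0 := (Real.exp_pos 1).ne'
  field_simp
  push_cast; ring

lemma normSq_lt_one {b : ℂ} (hb : ‖b‖ < 1) : Complex.normSq b < 1 := by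
  rw [← Complex.sq_norm]
  nlinarith [norm_nonneg b]

lemma denom_ne {b w : ℂ} (hb : ‖b‖ < 1) (hw : ‖w‖ < 1) :
    1 - (starRingEnd ℂ) b * w ≠ 0 := by
  intro hc
  have h1 : ‖(starRingEnd ℂ) b * w‖ = 1 := by
    have : (starRingEnd ℂ) b * w = 1 := by linear_combination -hc
    rw [this]; simp
  rw [norm_mul, Complex.norm_conj] at h1
  nlinarith [norm_nonneg b, norm_nonneg w]

lemma mobius_lt {b w : ℂ} (hb : ‖b‖ < 1) (hw : ‖w‖ < 1) :
    ‖(w - b) / (1 - (starRingEnd ℂ) b * w)‖ < 1 := by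
  rw [norm_div, div_lt_one (norm_pos_iff.mpr (denom_ne hb hw))]
  have h1 : Complex.normSq (w - b) < Complex.normSq (1 - (starRingEnd ℂ) b * w) := by
    have hb2 := normSq_lt_one hb
    have hw2 := normSq_lt_one hw
    rw [Complex.normSq_apply] at hb2 hw2
    simp only [Complex.normSq_apply, Complex.sub_re, Complex.sub_im, Complex.one_re,
      Complex.one_im, Complex.mul_re, Complex.mul_im, Complex.conj_re, Complex.conj_im]
    nlinarith [sq_nonneg (b.re * w.im - b.im * w.re), sq_nonneg (b.re * w.re + b.im * w.im)]
  have := Real.sqrt_lt_sqrt (Complex.normSq_nonneg _) h1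
  rwa [← Complex.norm_def, ← Complex.norm_def] at this

lemma schwarz_pick_zero {fhat : ℂ → ℂ} (hd : DifferentiableOn ℂ fhat (ball 0 1))
    (hmaps : ∀ z ∈ ball (0:ℂ) 1, fhat z ∈ ball (0:ℂ) 1) :
    ‖deriv fhat 0‖ ≤ 1 - ‖fhat 0‖ ^ 2 := by
  set b := fhat 0 with hbdef
  have hb : ‖b‖ < 1 := mem_ball_zero_iff.1 (hmaps 0 (mem_ball_self one_pos))
  set h : ℂ → ℂ := fun z => (fhat z - b) / (1 - (starRingEnd ℂ) b * fhat z) with hhdef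
  have habs : ∀ z ∈ ball (0:ℂ) 1, ‖fhat z‖ < 1 := fun z hz =>
    mem_ball_zero_iff.1 (hmaps z hz)
  have hdh : DifferentiableOn ℂ h (ball 0 1) := by
    apply DifferentiableOn.div (hd.sub_const b)
      ((differentiableOn_const 1).sub (hd.const_mul _))
    intro z hz
    exact denom_ne hb (habs z hz)
  have hh0 : h 0 = 0 := by simp [hhdef, ← hbdef]
  have hmapsh : Set.MapsTo h (ball 0 1) (ball 0 1) := by
    intro z hz
    exact mem_ball_zero_iff.2 (mobius_lt hb (habs z hz))
  have hschwarz : ‖deriv h 0‖ ≤ 1 :=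
    Complex.norm_deriv_le_one_of_mapsTo_ball hdh
      (fun z hz => by rw [hh0]; exact Metric.ball_subset_closedBall (hmapsh hz)) one_pos
  -- compute deriv h 0
  have hfd : HasDerivAt fhat (deriv fhat 0) 0 :=
    (hd.differentiableAt (isOpen_ball.mem_nhds (mem_ball_self one_pos))).hasDerivAt
  set d := deriv fhat 0
  have hden0 : (1 : ℂ) - (starRingEnd ℂ) b * fhat 0 ≠ 0 := denom_ne hb (habs 0 (mem_ball_self one_pos))
  have hu : HasDerivAt (fun z => fhat z - b) d 0 := hfd.sub_const b
  have hv : HasDerivAt (fun z => 1 - (starRingEnd ℂ) b * fhat z) (-((starRingEnd ℂ) b * d)) 0 :=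
    (hfd.const_mul ((starRingEnd ℂ) b)).const_sub 1
  have hderh : HasDerivAt h (d / (1 - (starRingEnd ℂ) b * b)) 0 := by
    have := hu.div hv hden0
    rw [hhdef]
    refine this.congr_deriv ?_
    rw [← hbdef]
    have hne : (1 : ℂ) - (starRingEnd ℂ) b * b ≠ 0 := by rw [hbdef]; exact hden0
    field_simp
    ring
  have hden : (1 : ℂ) - (starRingEnd ℂ) b * b = ((1 - ‖b‖ ^ 2 : ℝ) : ℂ) := by
    rw [mul_comm, Complex.mul_conj]
    push_cast [← Complex.sq_norm]
    ring
  have hpos : (0:ℝ) < 1 - ‖b‖ ^ 2 := by nlinarith [norm_nonneg b]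
  rw [hderh.deriv, hden, norm_div, Complex.norm_real, Real.norm_eq_abs, abs_of_pos hpos,
    div_le_one hpos] at hschwarz
  simpa using hschwarz


/-- Infinitesimal form of the extremality of `κ₀`: for every `a ∈ Δ` one has
`(1-|a|²)|κ₀′(a)| ≤ 2/e`, the maximum `2/e` being attained at `a = 0` where
`κ₀′(0) = 2/e`. Consequently, for every `f ∈ B₁` factored as `f = κ₀ ∘ f̂`
with `f̂ : Δ → Δ` holomorphic, `|c₁(f)| ≤ 2/e`. -/
theorem kappa0_infinitesimal_extremality :
    (∀ a ∈ Metric.ball (0 : ℂ) 1,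
      (1 - ‖a‖ ^ 2) * ‖deriv kappa0 a‖ ≤ 2 / Real.exp 1) ∧
    deriv kappa0 0 = ((2 / Real.exp 1 : ℝ) : ℂ) ∧
    (∀ f fhat : ℂ → ℂ,
      DifferentiableOn ℂ f (Metric.ball (0 : ℂ) 1) →
      (∀ z ∈ Metric.ball (0 : ℂ) 1, f z ≠ 0 ∧ ‖f z‖ < 1) →
      DifferentiableOn ℂ fhat (Metric.ball (0 : ℂ) 1) →
      (∀ z ∈ Metric.ball (0 : ℂ) 1, fhat z ∈ Metric.ball (0 : ℂ) 1) →
      (∀ z ∈ Metric.ball (0 : ℂ) 1, f z = kappa0 (fhat z)) →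
      ‖deriv f 0‖ ≤ 2 / Real.exp 1) := by

  refine ⟨fun a ha => part1 a (mem_ball_zero_iff.1 ha), part2, ?_⟩
  intro f fhat _hf _hfmem hdfhat hmaps hfeq
  set b := fhat 0 with hbdef
  have hb : ‖b‖ < 1 := mem_ball_zero_iff.1 (hmaps 0 (mem_ball_self one_pos))
  have hsp : ‖deriv fhat 0‖ ≤ 1 - ‖b‖ ^ 2 :=
    schwarz_pick_zero hdfhat hmaps
  have hfd : HasDerivAt fhat (deriv fhat 0) 0 :=
    (hdfhat.differentiableAt (isOpen_ball.mem_nhds (mem_ball_self one_pos))).hasDerivAt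
  have hk : HasDerivAt kappa0 (deriv kappa0 b) b :=
    (kappa0_hasDerivAt (add_one_ne hb)).congr_deriv (kappa0_hasDerivAt (add_one_ne hb)).deriv.symm
  have hcomp : HasDerivAt (fun z => kappa0 (fhat z)) (deriv kappa0 b * deriv fhat 0) 0 :=
    hk.comp 0 hfd
  have heq : f =ᶠ[nhds (0:ℂ)] fun z => kappa0 (fhat z) :=
    Filter.eventuallyEq_of_mem (isOpen_ball.mem_nhds (mem_ball_self one_pos)) hfeq
  have hfderiv : deriv f 0 = deriv kappa0 b * deriv fhat 0 := by
    rw [Filter.EventuallyEq.deriv_eq heq, hcomp.deriv]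
  rw [hfderiv, norm_mul]
  calc ‖deriv kappa0 b‖ * ‖deriv fhat 0‖
      ≤ ‖deriv kappa0 b‖ * (1 - ‖b‖ ^ 2) :=
        mul_le_mul_of_nonneg_left hsp (norm_nonneg _)
    _ = (1 - ‖b‖ ^ 2) * ‖deriv kappa0 b‖ := mul_comm _ _
    _ ≤ 2 / Real.exp 1 := part1 b hb
end
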